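/- arXiv:0901.4056 — 4 statements merged into one kernel-verified Lean document; each statement's English description precedes it below -/
import Mathlib

section
/- There is an absolute constant A > 0 such that the following holds for all sufficiently large n. Consider the relaxed adaptive allocation model with n balls and n bins, pool size at most 2^m with m ≥ log n, and all pool distributions having point masses at most k/n. Let ℓ be a positive integer satisfying 30·(20ℓ)^{2^ℓ − 1} ≤ min( √(n/(k·m)), √(n/(ℓ·log n)) ). Then with probability at least 1 − A·ℓ·n^{−4}, the maximal load after n rounds is at least ℓ. In particular, for any fixed ε ∈ (0,1), if n/(k·m) → ∞, then with high probability the maximal load is at least (1−ε)·log₂ log(n/(k·m)). -/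
open MeasureTheory Finset

/-- The load of bin `i` after `t` rounds, when ball `s` is placed in bin `J s ω`. -/
def binLoad {Ω : Type*} {n : ℕ} (J : ℕ → Ω → Fin n) (t : ℕ) (i : Fin n) (ω : Ω) : ℕ :=
  ((Finset.range t).filter fun s => J s ω = i).card

namespace ULLB

variable {Ω : Type} {n : ℕ}

/-- Indicator (as a real number) that bin `i` has load at least `j` after `t` rounds. -/
noncomputable def hiI (J : ℕ → Ω → Fin n) (j t : ℕ) (i : Fin n) (ω : Ω) : ℝ :=
  if j ≤ binLoad J t i ω then 1 else 0

/-- Indicator (as a real number) that bin `i` has load exactly `c` after `t` rounds. -/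
noncomputable def eiI (J : ℕ → Ω → Fin n) (c t : ℕ) (i : Fin n) (ω : Ω) : ℝ :=
  if binLoad J t i ω = c then 1 else 0

lemma hiI_nonneg (J : ℕ → Ω → Fin n) (j t : ℕ) (i : Fin n) (ω : Ω) : 0 ≤ hiI J j t i ω := by
  unfold hiI; split <;> norm_num

lemma hiI_le_one (J : ℕ → Ω → Fin n) (j t : ℕ) (i : Fin n) (ω : Ω) : hiI J j t i ω ≤ 1 := by
  unfold hiI; split <;> norm_num

lemma eiI_nonneg (J : ℕ → Ω → Fin n) (c t : ℕ) (i : Fin n) (ω : Ω) : 0 ≤ eiI J c t i ω := by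
  unfold eiI; split <;> norm_num

lemma eiI_le_one (J : ℕ → Ω → Fin n) (c t : ℕ) (i : Fin n) (ω : Ω) : eiI J c t i ω ≤ 1 := by
  unfold eiI; split <;> norm_num

lemma hiI_zero (J : ℕ → Ω → Fin n) (t : ℕ) (i : Fin n) (ω : Ω) : hiI J 0 t i ω = 1 := by
  unfold hiI; simp

lemma hiI_sub_eiI (J : ℕ → Ω → Fin n) (c t : ℕ) (i : Fin n) (ω : Ω) :
    hiI J c t i ω - hiI J (c + 1) t i ω = eiI J c t i ω := by
  unfold hiI eiI
  rcases Nat.lt_trichotomy (binLoad J t i ω) c with h | h | h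
  · rw [if_neg (by omega), if_neg (by omega), if_neg (by omega)]; ring
  · rw [if_pos (by omega), if_neg (by omega), if_pos (by omega)]; ring
  · rw [if_pos (by omega), if_pos (by omega), if_neg (by omega)]; ring

lemma binLoad_succ (J : ℕ → Ω → Fin n) (t : ℕ) (i : Fin n) (ω : Ω) :
    binLoad J (t + 1) i ω = binLoad J t i ω + (if J t ω = i then 1 else 0) := by
  unfold binLoad
  rw [Finset.range_add_one, Finset.filter_insert]
  split
  · rw [Finset.card_insert_of_notMem (by simp)]
  · omega

lemma binLoad_mono (J : ℕ → Ω → Fin n) {t t' : ℕ} (h : t ≤ t') (i : Fin n) (ω : Ω) :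
    binLoad J t i ω ≤ binLoad J t' i ω :=
  Finset.card_le_card (Finset.filter_subset_filter _ (Finset.range_subset_range.2 h))

/-- Telescoping identity: the `ν`-mass of bins with load at least `c+1` after `t` rounds equals
the sum over past rounds of the mass of the ball's bin when its load was exactly `c`. -/
lemma mass_eq (J : ℕ → Ω → Fin n) (ν : Fin n → ℝ) (c t : ℕ) (ω : Ω) :
    ∑ i, ν i * hiI J (c + 1) t i ω
      = ∑ s ∈ Finset.range t, ν (J s ω) * eiI J c s (J s ω) ω := by
  induction t with
  | zero =>
    simp [hiI, binLoad]
  | succ t ih =>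
    rw [Finset.sum_range_succ, ← ih]
    have key : ∀ i : Fin n, ν i * hiI J (c + 1) (t + 1) i ω
        = ν i * hiI J (c + 1) t i ω + (if J t ω = i then ν i * eiI J c t i ω else 0) := by
      intro i
      by_cases hJi : J t ω = i
      · rw [if_pos hJi]
        have hload : binLoad J (t + 1) i ω = binLoad J t i ω + 1 := by
          rw [binLoad_succ, if_pos hJi]
        unfold hiI eiI
        rw [hload]
        rcases Nat.lt_trichotomy (binLoad J t i ω) c with h | h | h
        · rw [if_neg (by omega), if_neg (by omega), if_neg (by omega)]; ring
        · rw [if_pos (by omega), if_neg (by omega), if_pos (by omega)]; ring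
        · rw [if_pos (by omega), if_pos (by omega), if_neg (by omega)]; ring
      · rw [if_neg hJi]
        have hload : binLoad J (t + 1) i ω = binLoad J t i ω := by
          rw [binLoad_succ, if_neg hJi]; ring
        unfold hiI
        rw [hload]; ring
    rw [Finset.sum_congr rfl (fun i _ => key i), Finset.sum_add_distrib,
      Finset.sum_ite_eq Finset.univ (J t ω) (fun i => ν i * eiI J c t i ω)]
    simp

/-- Expansion of the square of a sum into twice the lower-triangular part plus the diagonal. -/
lemma sq_expand (f : ℕ → ℝ) (T : ℕ) :
    (∑ s ∈ Finset.range T, f s) ^ 2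
      = 2 * ∑ s ∈ Finset.range T, ∑ r ∈ Finset.range s, f s * f r
        + ∑ s ∈ Finset.range T, (f s) ^ 2 := by
  induction T with
  | zero => simp
  | succ T ih =>
    rw [Finset.sum_range_succ f,
      Finset.sum_range_succ (fun s => ∑ r ∈ Finset.range s, f s * f r),
      Finset.sum_range_succ (fun s => (f s) ^ 2), add_sq, ih]
    have : ∑ r ∈ Finset.range T, f T * f r = f T * ∑ r ∈ Finset.range T, f r := by
      rw [Finset.mul_sum]
    rw [this]
    ring


section Meas

variable {m0 : MeasurableSpace Ω}

lemma meas_binLoad (ℱ : Filtration ℕ m0) (J : ℕ → Ω → Fin n)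
    (hJ : ∀ s, Measurable[ℱ (s + 1)] (J s)) (t : ℕ) (i : Fin n) :
    Measurable[ℱ t] fun ω => binLoad J t i ω := by
  induction t with
  | zero =>
    have : (fun ω => binLoad J 0 i ω) = fun _ => 0 := by
      funext ω; simp [binLoad]
    rw [this]; exact measurable_const
  | succ t ih =>
    have : (fun ω => binLoad J (t + 1) i ω)
        = fun ω => binLoad J t i ω + (if J t ω = i then 1 else 0) := by
      funext ω; rw [binLoad_succ]
    rw [this]
    refine Measurable.add (ih.mono (ℱ.mono (Nat.le_succ t)) le_rfl) ?_
    exact Measurable.ite ((hJ t) (measurableSet_singleton i)) measurable_const measurable_const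

lemma meas_eiI (ℱ : Filtration ℕ m0) (J : ℕ → Ω → Fin n)
    (hJ : ∀ s, Measurable[ℱ (s + 1)] (J s)) (c t : ℕ) (i : Fin n) :
    Measurable[ℱ t] fun ω => eiI J c t i ω := by
  unfold eiI
  exact Measurable.ite ((meas_binLoad ℱ J hJ t i) (measurableSet_singleton c))
    measurable_const measurable_const

lemma meas_hiI (ℱ : Filtration ℕ m0) (J : ℕ → Ω → Fin n)
    (hJ : ∀ s, Measurable[ℱ (s + 1)] (J s)) (j t : ℕ) (i : Fin n) :
    Measurable[ℱ t] fun ω => hiI J j t i ω := by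
  unfold hiI
  have : MeasurableSet[ℱ t] {ω | j ≤ binLoad J t i ω} :=
    (meas_binLoad ℱ J hJ t i) measurableSet_Ici
  exact Measurable.ite this measurable_const measurable_const

lemma bdd_integrable {μ : Measure Ω} [IsProbabilityMeasure μ]
    (f : Ω → ℝ) (hf : Measurable f) (C : ℝ) (hC : ∀ ω, |f ω| ≤ C) : Integrable f μ :=
  Integrable.mono' (integrable_const C) hf.aestronglyMeasurable (Filter.Eventually.of_forall hC)

/-- Pull-out: the expectation of an `ℱ s`-measurable bounded function times the indicator that
ball `s` lands in bin `i` equals its expectation against the conditional law `Q s · i`. -/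
lemma pull {μ : Measure Ω} [IsProbabilityMeasure μ]
    (ℱ : Filtration ℕ m0) (Q : ℕ → Ω → Fin n → ℝ) (J : ℕ → Ω → Fin n)
    (hJ : ∀ t, Measurable[ℱ (t + 1)] (J t))
    (hQJ : ∀ t i, (μ[(fun ω => if J t ω = i then (1 : ℝ) else 0) | ℱ t])
        =ᵐ[μ] fun ω => Q t ω i)
    (s : ℕ) (i : Fin n) (g : Ω → ℝ) (hg : Measurable[ℱ s] g) (C : ℝ)
    (hgb : ∀ ω, |g ω| ≤ C) :
    ∫ ω, g ω * (if J s ω = i then (1 : ℝ) else 0) ∂μ = ∫ ω, g ω * Q s ω i ∂μ := by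
  have hm : ℱ s ≤ m0 := ℱ.le s
  have hJm : Measurable (J s) := (hJ s).mono (ℱ.le (s + 1)) le_rfl
  have hindm : Measurable fun ω => if J s ω = i then (1 : ℝ) else 0 :=
    Measurable.ite (hJm (measurableSet_singleton i)) measurable_const measurable_const
  have hind : Integrable (fun ω => if J s ω = i then (1 : ℝ) else 0) μ :=
    bdd_integrable _ hindm 1 (fun ω => by split <;> norm_num)
  have hpull : (μ[(fun ω => g ω * (if J s ω = i then (1 : ℝ) else 0)) | ℱ s])
      =ᵐ[μ] fun ω => g ω * (μ[(fun ω => if J s ω = i then (1 : ℝ) else 0) | ℱ s]) ω := by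
    exact condExp_stronglyMeasurable_mul_of_bound hm hg.stronglyMeasurable hind C
      (Filter.Eventually.of_forall (fun ω => by
        rw [Real.norm_eq_abs]; exact hgb ω))
  have h2 : (μ[(fun ω => g ω * (if J s ω = i then (1 : ℝ) else 0)) | ℱ s])
      =ᵐ[μ] fun ω => g ω * Q s ω i := by
    refine hpull.trans ?_
    filter_upwards [hQJ s i] with ω hω
    rw [hω]
  calc ∫ ω, g ω * (if J s ω = i then (1 : ℝ) else 0) ∂μ
      = ∫ ω, (μ[(fun ω => g ω * (if J s ω = i then (1 : ℝ) else 0)) | ℱ s]) ω ∂μ :=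
        (integral_condExp hm).symm
    _ = ∫ ω, g ω * Q s ω i ∂μ := integral_congr_ae h2

end Meas

lemma exp_le_aux1 {x : ℝ} (h0 : 0 ≤ x) (h1 : x ≤ 1) : Real.exp (-x) ≤ 1 - x / 2 := by
  have ha := Real.add_one_le_exp x
  have hb : Real.exp (-x) * Real.exp x = 1 := by rw [← Real.exp_add]; simp
  have hc := Real.exp_pos x
  have hd := (Real.exp_pos (-x)).le
  nlinarith [mul_nonneg hd (sub_nonneg.2 h1)]

lemma exp_le_aux2 {p : ℝ} (_h0 : 0 ≤ p) (_h1 : p ≤ 1) : Real.exp (p / 2) * (1 - p / 2) ≤ 1 := by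
  have ha := Real.add_one_le_exp (-(p / 2))
  have hb : Real.exp (p / 2) * Real.exp (-(p / 2)) = 1 := by rw [← Real.exp_add]; simp
  have hc := (Real.exp_pos (p / 2)).le
  nlinarith

section Core

variable {m0 : MeasurableSpace Ω} {μ : Measure Ω} [IsProbabilityMeasure μ]

/-- The basic exponential supermartingale bound: if at each round the conditional mean of the
increment `x s` (valued in `[0,1]`) is `p s`, then `E[exp(∑ (p s / 2 - x s))] ≤ 1`. -/
lemma core (ℱ : Filtration ℕ m0) (x p : ℕ → Ω → ℝ)
    (hx0 : ∀ s ω, 0 ≤ x s ω) (hx1 : ∀ s ω, x s ω ≤ 1)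
    (hp0 : ∀ s ω, 0 ≤ p s ω) (hp1 : ∀ s ω, p s ω ≤ 1)
    (hxms : ∀ s, Measurable[ℱ (s + 1)] (x s))
    (hpm : ∀ s, Measurable[ℱ s] (p s))
    (hpull : ∀ (s : ℕ) (g : Ω → ℝ), Measurable[ℱ s] g → (∀ ω, 0 ≤ g ω) →
        (∃ C, ∀ ω, g ω ≤ C) → ∫ ω, g ω * x s ω ∂μ = ∫ ω, g ω * p s ω ∂μ)
    (T : ℕ) :
    ∫ ω, Real.exp (∑ s ∈ Finset.range T, (p s ω / 2 - x s ω)) ∂μ ≤ 1 := by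
  induction T with
  | zero => simp
  | succ T ih =>
    set E : Ω → ℝ := fun ω => Real.exp (∑ s ∈ Finset.range T, (p s ω / 2 - x s ω)) with hE
    have hEm : Measurable[ℱ T] E := by
      refine Real.measurable_exp.comp (Finset.measurable_sum _ fun s hs => ?_)
      have hs' : s < T := Finset.mem_range.1 hs
      refine Measurable.sub ?_ ?_
      · exact ((hpm s).mono (ℱ.mono hs'.le) le_rfl).div_const 2
      · exact (hxms s).mono (ℱ.mono hs') le_rfl
    have hE0 : ∀ ω, 0 ≤ E ω := fun ω => (Real.exp_pos _).le
    have hEb : ∀ ω, E ω ≤ Real.exp (T / 2) := by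
      intro ω
      refine Real.exp_le_exp.2 ?_
      calc ∑ s ∈ Finset.range T, (p s ω / 2 - x s ω)
          ≤ ∑ _s ∈ Finset.range T, (1 : ℝ) / 2 := by
            refine Finset.sum_le_sum fun s _ => ?_
            have := hx0 s ω; have := hp1 s ω; linarith
        _ = T / 2 := by simp [Finset.sum_const]; ring
    set G : Ω → ℝ := fun ω => E ω * Real.exp (p T ω / 2) with hG
    have hGm : Measurable[ℱ T] G :=
      (hEm.mul (Real.measurable_exp.comp ((hpm T).div_const 2)))
    have hGm0 : Measurable G := hGm.mono (ℱ.le T) le_rfl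
    have hG0 : ∀ ω, 0 ≤ G ω := fun ω =>
      mul_nonneg (hE0 ω) (Real.exp_pos _).le
    have hGb : ∀ ω, G ω ≤ Real.exp (T / 2) * Real.exp (1 / 2) := by
      intro ω
      refine mul_le_mul (hEb ω) ?_ (Real.exp_pos _).le (Real.exp_pos _).le
      exact Real.exp_le_exp.2 (by have := hp1 T ω; linarith)
    set CG : ℝ := Real.exp (T / 2) * Real.exp (1 / 2) with hCG
    have hCG0 : 0 ≤ CG := by positivity
    have hxTm : Measurable (x T) := (hxms T).mono (ℱ.le (T + 1)) le_rfl
    have hpTm : Measurable (p T) := (hpm T).mono (ℱ.le T) le_rfl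
    have hEm0 : Measurable E := hEm.mono (ℱ.le T) le_rfl
    -- integrability of all the bounded functions we use
    have int1 : Integrable (fun ω => G ω * Real.exp (-(x T ω))) μ := by
      refine bdd_integrable _ (hGm0.mul (Real.measurable_exp.comp hxTm.neg)) CG fun ω => ?_
      rw [abs_of_nonneg (mul_nonneg (hG0 ω) (Real.exp_pos _).le)]
      calc G ω * Real.exp (-(x T ω)) ≤ G ω * 1 := by
            refine mul_le_mul_of_nonneg_left ?_ (hG0 ω)
            rw [Real.exp_le_one_iff]; exact neg_nonpos.2 (hx0 T ω)
        _ ≤ CG := by rw [mul_one]; exact hGb ω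
    have int2 : Integrable (fun ω => G ω * (1 - x T ω / 2)) μ := by
      refine bdd_integrable _ (hGm0.mul ((measurable_const.sub (hxTm.div_const 2)))) CG fun ω => ?_
      have h1 : 0 ≤ 1 - x T ω / 2 := by have := hx1 T ω; linarith
      rw [abs_of_nonneg (mul_nonneg (hG0 ω) h1)]
      calc G ω * (1 - x T ω / 2) ≤ G ω * 1 := by
            refine mul_le_mul_of_nonneg_left ?_ (hG0 ω)
            have := hx0 T ω; linarith
        _ ≤ CG := by rw [mul_one]; exact hGb ω
    have intG : Integrable G μ := by
      refine bdd_integrable _ hGm0 CG fun ω => ?_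
      rw [abs_of_nonneg (hG0 ω)]; exact hGb ω
    have intGx : Integrable (fun ω => G ω * x T ω) μ := by
      refine bdd_integrable _ (hGm0.mul hxTm) CG fun ω => ?_
      rw [abs_of_nonneg (mul_nonneg (hG0 ω) (hx0 T ω))]
      calc G ω * x T ω ≤ G ω * 1 := mul_le_mul_of_nonneg_left (hx1 T ω) (hG0 ω)
        _ ≤ CG := by rw [mul_one]; exact hGb ω
    have intGp : Integrable (fun ω => G ω * p T ω) μ := by
      refine bdd_integrable _ (hGm0.mul hpTm) CG fun ω => ?_
      rw [abs_of_nonneg (mul_nonneg (hG0 ω) (hp0 T ω))]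
      calc G ω * p T ω ≤ G ω * 1 := mul_le_mul_of_nonneg_left (hp1 T ω) (hG0 ω)
        _ ≤ CG := by rw [mul_one]; exact hGb ω
    have intE : Integrable E μ := by
      refine bdd_integrable _ hEm0 (Real.exp (T / 2)) fun ω => ?_
      rw [abs_of_nonneg (hE0 ω)]; exact hEb ω
    have step0 : (fun ω => Real.exp (∑ s ∈ Finset.range (T + 1), (p s ω / 2 - x s ω)))
        = fun ω => G ω * Real.exp (-(x T ω)) := by
      funext ω
      rw [Finset.sum_range_succ, Real.exp_add, hG]
      have : Real.exp (p T ω / 2 - x T ω) = Real.exp (p T ω / 2) * Real.exp (-(x T ω)) := by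
        rw [← Real.exp_add]; ring_nf
      rw [this, hE]; ring
    rw [step0]
    have step2 : ∫ ω, G ω * Real.exp (-(x T ω)) ∂μ ≤ ∫ ω, G ω * (1 - x T ω / 2) ∂μ := by
      refine integral_mono int1 int2 fun ω => ?_
      exact mul_le_mul_of_nonneg_left (exp_le_aux1 (hx0 T ω) (hx1 T ω)) (hG0 ω)
    have step3 : ∫ ω, G ω * (1 - x T ω / 2) ∂μ
        = ∫ ω, G ω ∂μ - (∫ ω, G ω * x T ω ∂μ) / 2 := by
      have : (fun ω => G ω * (1 - x T ω / 2)) = fun ω => G ω - (G ω * x T ω) / 2 := by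
        funext ω; ring
      rw [this, integral_sub intG (intGx.div_const 2), integral_div]
    have step4 : ∫ ω, G ω * x T ω ∂μ = ∫ ω, G ω * p T ω ∂μ :=
      hpull T G hGm hG0 ⟨CG, hGb⟩
    have step5 : ∫ ω, G ω ∂μ - (∫ ω, G ω * p T ω ∂μ) / 2 ≤ ∫ ω, E ω ∂μ := by
      have heq : ∫ ω, G ω ∂μ - (∫ ω, G ω * p T ω ∂μ) / 2
          = ∫ ω, G ω - (G ω * p T ω) / 2 ∂μ := by
        rw [integral_sub intG (intGp.div_const 2), integral_div]
      rw [heq]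
      refine integral_mono (by exact intG.sub (intGp.div_const 2)) intE fun ω => ?_
      have hkey : Real.exp (p T ω / 2) * (1 - p T ω / 2) ≤ 1 :=
        exp_le_aux2 (hp0 T ω) (hp1 T ω)
      have : G ω - G ω * p T ω / 2 = E ω * (Real.exp (p T ω / 2) * (1 - p T ω / 2)) := by
        rw [hG]; ring
      calc G ω - (G ω * p T ω) / 2
          = E ω * (Real.exp (p T ω / 2) * (1 - p T ω / 2)) := this
        _ ≤ E ω * 1 := mul_le_mul_of_nonneg_left hkey (hE0 ω)
        _ = E ω := mul_one _
    calc ∫ ω, G ω * Real.exp (-(x T ω)) ∂μ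
        ≤ ∫ ω, G ω * (1 - x T ω / 2) ∂μ := step2
      _ = ∫ ω, G ω ∂μ - (∫ ω, G ω * x T ω ∂μ) / 2 := step3
      _ = ∫ ω, G ω ∂μ - (∫ ω, G ω * p T ω ∂μ) / 2 := by rw [step4]
      _ ≤ ∫ ω, E ω ∂μ := step5
      _ ≤ 1 := ih

end Core

section Bad

variable {m0 : MeasurableSpace Ω} {μ : Measure Ω} [IsProbabilityMeasure μ]

/-- `ν`-mass of the bins having load at least `c+1` after `T` rounds. -/
noncomputable def MassF (J : ℕ → Ω → Fin n) (ν : Fin n → ℝ) (c T : ℕ) (ω : Ω) : ℝ :=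
  ∑ i, ν i * hiI J (c + 1) T i ω

/-- Accumulated conditional mean of the increments of `MassF`. -/
noncomputable def RF (Q : ℕ → Ω → Fin n → ℝ) (J : ℕ → Ω → Fin n) (ν : Fin n → ℝ)
    (c T : ℕ) (ω : Ω) : ℝ :=
  ∑ r ∈ Finset.range T, ∑ i, Q r ω i * (ν i * eiI J c r i ω)

lemma bad_bound (ℱ : Filtration ℕ m0) (pool : Finset (Fin n → ℝ))
    (hn : 0 < n) (k mm : ℕ) (hk : 0 < k)
    (hpos : ∀ ν ∈ pool, ∀ i, 0 ≤ ν i)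
    (hsum : ∀ ν ∈ pool, ∑ i, ν i = 1)
    (hbd : ∀ ν ∈ pool, ∀ i, ν i ≤ (k : ℝ) / n)
    (Q : ℕ → Ω → Fin n → ℝ) (J : ℕ → Ω → Fin n)
    (hpool : ∀ t ω, Q t ω ∈ pool)
    (hQm : ∀ t i, Measurable[ℱ t] fun ω => Q t ω i)
    (hJ : ∀ t, Measurable[ℱ (t + 1)] (J t))
    (hQJ : ∀ t i, (μ[(fun ω => if J t ω = i then (1 : ℝ) else 0) | ℱ t])
        =ᵐ[μ] fun ω => Q t ω i)
    (ν : Fin n → ℝ) (hν : ν ∈ pool) (c T : ℕ) :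
    μ {ω | MassF J ν c T ω < RF Q J ν c T ω / 2 - 14 * k * mm / n}
      ≤ ENNReal.ofReal (Real.exp (-(14 * (mm : ℝ)))) := by
  have hnR : (0 : ℝ) < n := by exact_mod_cast hn
  have hkR : (0 : ℝ) < k := by exact_mod_cast hk
  have hknR : (0 : ℝ) < (k : ℝ) / n := div_pos hkR hnR
  set x : ℕ → Ω → ℝ := fun s ω =>
    ((n : ℝ) / k) * ∑ i, (if J s ω = i then (1 : ℝ) else 0) * (ν i * eiI J c s i ω) with hxdef
  set p : ℕ → Ω → ℝ := fun s ω =>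
    ((n : ℝ) / k) * ∑ i, Q s ω i * (ν i * eiI J c s i ω) with hpdef
  have hx_eq : ∀ s ω, x s ω = ((n : ℝ) / k) * (ν (J s ω) * eiI J c s (J s ω) ω) := by
    intro s ω
    simp only [hxdef]
    congr 1
    rw [Finset.sum_eq_single (J s ω)]
    · simp
    · intro b _ hb
      rw [if_neg (fun h => hb h.symm), zero_mul]
    · intro h; exact absurd (Finset.mem_univ _) h
  have hνb : ∀ i, 0 ≤ ν i ∧ ν i ≤ (k : ℝ) / n := fun i => ⟨hpos ν hν i, hbd ν hν i⟩
  have hx0 : ∀ s ω, 0 ≤ x s ω := by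
    intro s ω
    rw [hx_eq]
    exact mul_nonneg (by positivity)
      (mul_nonneg (hνb _).1 (eiI_nonneg _ _ _ _ _))
  have hx1 : ∀ s ω, x s ω ≤ 1 := by
    intro s ω
    rw [hx_eq]
    have h1 : ν (J s ω) * eiI J c s (J s ω) ω ≤ (k : ℝ) / n := by
      calc ν (J s ω) * eiI J c s (J s ω) ω ≤ ν (J s ω) * 1 :=
            mul_le_mul_of_nonneg_left (eiI_le_one _ _ _ _ _) (hνb _).1
        _ ≤ (k : ℝ) / n := by rw [mul_one]; exact (hνb _).2
    calc ((n : ℝ) / k) * (ν (J s ω) * eiI J c s (J s ω) ω)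
        ≤ ((n : ℝ) / k) * ((k : ℝ) / n) := by
          exact mul_le_mul_of_nonneg_left h1 (by positivity)
      _ = 1 := by field_simp
  have hQrow : ∀ s ω i, 0 ≤ Q s ω i ∧ Q s ω i ≤ (k : ℝ) / n :=
    fun s ω i => ⟨hpos _ (hpool s ω) i, hbd _ (hpool s ω) i⟩
  have hQsum : ∀ s ω, ∑ i, Q s ω i = 1 := fun s ω => hsum _ (hpool s ω)
  have hp0 : ∀ s ω, 0 ≤ p s ω := by
    intro s ω
    simp only [hpdef]
    refine mul_nonneg (by positivity) (Finset.sum_nonneg fun i _ => ?_)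
    exact mul_nonneg (hQrow s ω i).1 (mul_nonneg (hνb i).1 (eiI_nonneg _ _ _ _ _))
  have hp1 : ∀ s ω, p s ω ≤ 1 := by
    intro s ω
    simp only [hpdef]
    have h1 : ∑ i, Q s ω i * (ν i * eiI J c s i ω) ≤ (k : ℝ) / n := by
      calc ∑ i, Q s ω i * (ν i * eiI J c s i ω)
          ≤ ∑ i, Q s ω i * ((k : ℝ) / n) := by
            refine Finset.sum_le_sum fun i _ => ?_
            refine mul_le_mul_of_nonneg_left ?_ (hQrow s ω i).1
            calc ν i * eiI J c s i ω ≤ ν i * 1 :=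
                  mul_le_mul_of_nonneg_left (eiI_le_one _ _ _ _ _) (hνb i).1
              _ ≤ (k : ℝ) / n := by rw [mul_one]; exact (hνb i).2
        _ = (k : ℝ) / n := by rw [← Finset.sum_mul, hQsum, one_mul]
    calc ((n : ℝ) / k) * ∑ i, Q s ω i * (ν i * eiI J c s i ω)
        ≤ ((n : ℝ) / k) * ((k : ℝ) / n) := mul_le_mul_of_nonneg_left h1 (by positivity)
      _ = 1 := by field_simp
  have hxms : ∀ s, Measurable[ℱ (s + 1)] (x s) := by
    intro s
    refine Measurable.const_mul (Finset.measurable_sum _ fun i _ => ?_) _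
    refine Measurable.mul ?_ ?_
    · exact Measurable.ite ((hJ s) (measurableSet_singleton i)) measurable_const
        measurable_const
    · exact (Measurable.const_mul
        ((meas_eiI ℱ J hJ c s i).mono (ℱ.mono (Nat.le_succ s)) le_rfl) _)
  have hpm : ∀ s, Measurable[ℱ s] (p s) := by
    intro s
    refine Measurable.const_mul (Finset.measurable_sum _ fun i _ => ?_) _
    exact (hQm s i).mul (Measurable.const_mul (meas_eiI ℱ J hJ c s i) _)
  have hpull : ∀ (s : ℕ) (g : Ω → ℝ), Measurable[ℱ s] g → (∀ ω, 0 ≤ g ω) →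
      (∃ C, ∀ ω, g ω ≤ C) → ∫ ω, g ω * x s ω ∂μ = ∫ ω, g ω * p s ω ∂μ := by
    intro s g hg hg0 ⟨C, hC⟩
    have hgabs : ∀ ω, |g ω| ≤ C := fun ω => by
      rw [abs_of_nonneg (hg0 ω)]; exact hC ω
    have hgi : ∀ i : Fin n, Measurable[ℱ s] fun ω => g ω * (ν i * eiI J c s i ω) :=
      fun i => hg.mul (Measurable.const_mul (meas_eiI ℱ J hJ c s i) _)
    have hgib : ∀ (i : Fin n) ω, |g ω * (ν i * eiI J c s i ω)| ≤ C * ((k : ℝ) / n) := by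
      intro i ω
      rw [abs_mul]
      have h2 : |ν i * eiI J c s i ω| ≤ (k : ℝ) / n := by
        rw [abs_of_nonneg (mul_nonneg (hνb i).1 (eiI_nonneg _ _ _ _ _))]
        calc ν i * eiI J c s i ω ≤ ν i * 1 :=
              mul_le_mul_of_nonneg_left (eiI_le_one _ _ _ _ _) (hνb i).1
          _ ≤ (k : ℝ) / n := by rw [mul_one]; exact (hνb i).2
      have hCnn : 0 ≤ C := le_trans (abs_nonneg _) (hgabs ω)
      exact mul_le_mul (hgabs ω) h2 (abs_nonneg _) hCnn
    have expand1 : ∀ ω, g ω * x s ω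
        = ∑ i, ((n : ℝ) / k) * ((g ω * (ν i * eiI J c s i ω))
            * (if J s ω = i then (1 : ℝ) else 0)) := by
      intro ω
      simp only [hxdef, Finset.mul_sum]
      refine Finset.sum_congr rfl fun i _ => ?_
      ring
    have expand2 : ∀ ω, g ω * p s ω
        = ∑ i, ((n : ℝ) / k) * ((g ω * (ν i * eiI J c s i ω)) * Q s ω i) := by
      intro ω
      simp only [hpdef, Finset.mul_sum]
      refine Finset.sum_congr rfl fun i _ => ?_
      ring
    have hJm : Measurable (J s) := (hJ s).mono (ℱ.le (s + 1)) le_rfl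
    have int1 : ∀ i : Fin n, Integrable (fun ω => ((n : ℝ) / k) *
        ((g ω * (ν i * eiI J c s i ω)) * (if J s ω = i then (1 : ℝ) else 0))) μ := by
      intro i
      refine bdd_integrable _ ?_ (((n : ℝ) / k) * (C * ((k : ℝ) / n))) fun ω => ?_
      · refine Measurable.const_mul (Measurable.mul ?_ ?_) _
        · exact ((hgi i).mono (ℱ.le s) le_rfl)
        · exact Measurable.ite (hJm (measurableSet_singleton i)) measurable_const
            measurable_const
      · rw [abs_mul, abs_mul]
        rw [abs_of_nonneg (by positivity : (0:ℝ) ≤ (n : ℝ) / k)]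
        refine mul_le_mul_of_nonneg_left ?_ (by positivity)
        have h3 : |if J s ω = i then (1:ℝ) else 0| ≤ 1 := by split <;> norm_num
        calc |g ω * (ν i * eiI J c s i ω)| * |if J s ω = i then (1:ℝ) else 0|
            ≤ (C * ((k : ℝ) / n)) * 1 := by
              refine mul_le_mul (hgib i ω) h3 (abs_nonneg _) ?_
              have hCnn : 0 ≤ C := le_trans (abs_nonneg _) (hgabs ω)
              positivity
          _ = C * ((k : ℝ) / n) := mul_one _
    have int2 : ∀ i : Fin n, Integrable (fun ω => ((n : ℝ) / k) *
        ((g ω * (ν i * eiI J c s i ω)) * Q s ω i)) μ := by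
      intro i
      refine bdd_integrable _ ?_ (((n : ℝ) / k) * ((C * ((k : ℝ) / n)) * ((k : ℝ) / n)))
        fun ω => ?_
      · refine Measurable.const_mul (Measurable.mul ?_ ?_) _
        · exact ((hgi i).mono (ℱ.le s) le_rfl)
        · exact ((hQm s i).mono (ℱ.le s) le_rfl)
      · rw [abs_mul, abs_mul]
        rw [abs_of_nonneg (by positivity : (0:ℝ) ≤ (n : ℝ) / k)]
        refine mul_le_mul_of_nonneg_left ?_ (by positivity)
        have h3 : |Q s ω i| ≤ (k : ℝ) / n := by
          rw [abs_of_nonneg (hQrow s ω i).1]; exact (hQrow s ω i).2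
        refine mul_le_mul (hgib i ω) h3 (abs_nonneg _) ?_
        have hCnn : 0 ≤ C := le_trans (abs_nonneg _) (hgabs ω)
        positivity
    calc ∫ ω, g ω * x s ω ∂μ
        = ∫ ω, ∑ i, ((n : ℝ) / k) * ((g ω * (ν i * eiI J c s i ω))
            * (if J s ω = i then (1 : ℝ) else 0)) ∂μ := by
          refine integral_congr_ae (Filter.Eventually.of_forall fun ω => expand1 ω)
      _ = ∑ i, ∫ ω, ((n : ℝ) / k) * ((g ω * (ν i * eiI J c s i ω))
            * (if J s ω = i then (1 : ℝ) else 0)) ∂μ :=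
          integral_finset_sum _ fun i _ => int1 i
      _ = ∑ i, ∫ ω, ((n : ℝ) / k) * ((g ω * (ν i * eiI J c s i ω)) * Q s ω i) ∂μ := by
          refine Finset.sum_congr rfl fun i _ => ?_
          rw [integral_const_mul, integral_const_mul]
          congr 1
          exact pull ℱ Q J hJ hQJ s i _ (hgi i) (C * ((k : ℝ) / n)) (hgib i)
      _ = ∫ ω, ∑ i, ((n : ℝ) / k) * ((g ω * (ν i * eiI J c s i ω)) * Q s ω i) ∂μ :=
          (integral_finset_sum _ fun i _ => int2 i).symm
      _ = ∫ ω, g ω * p s ω ∂μ := by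
          refine integral_congr_ae (Filter.Eventually.of_forall fun ω => (expand2 ω).symm)
  have hcore := core ℱ x p hx0 hx1 hp0 hp1 hxms hpm hpull T
  -- Markov step
  set W : Ω → ℝ := fun ω => Real.exp (∑ s ∈ Finset.range T, (p s ω / 2 - x s ω)) with hW
  have hWm : Measurable W := by
    refine Real.measurable_exp.comp (Finset.measurable_sum _ fun s _ => ?_)
    refine Measurable.sub (Measurable.div_const ?_ 2) ?_
    · exact (hpm s).mono (ℱ.le s) le_rfl
    · exact (hxms s).mono (ℱ.le (s + 1)) le_rfl
  have hWint : Integrable W μ := by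
    refine bdd_integrable _ hWm (Real.exp ((T : ℝ) / 2)) fun ω => ?_
    rw [abs_of_nonneg (Real.exp_pos _).le]
    refine Real.exp_le_exp.2 ?_
    calc ∑ s ∈ Finset.range T, (p s ω / 2 - x s ω)
        ≤ ∑ _s ∈ Finset.range T, (1 : ℝ) / 2 := by
          refine Finset.sum_le_sum fun s _ => ?_
          have := hx0 s ω; have := hp1 s ω; linarith
      _ = (T : ℝ) / 2 := by simp [Finset.sum_const]; ring
  have hmarkov := mul_meas_ge_le_integral_of_nonneg
    (Filter.Eventually.of_forall fun ω => (Real.exp_pos _).le : 0 ≤ᵐ[μ] W)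
    hWint (Real.exp (14 * (mm : ℝ)))
  have hsub : {ω | MassF J ν c T ω < RF Q J ν c T ω / 2 - 14 * k * mm / n}
      ⊆ {ω | Real.exp (14 * (mm : ℝ)) ≤ W ω} := by
    intro ω hω
    simp only [Set.mem_setOf_eq] at hω ⊢
    have hmass : MassF J ν c T ω = ((k : ℝ) / n) * ∑ s ∈ Finset.range T, x s ω := by
      unfold MassF
      rw [mass_eq J ν c T ω, Finset.mul_sum]
      refine Finset.sum_congr rfl fun s _ => ?_
      rw [hx_eq]
      field_simp
    have hR : RF Q J ν c T ω = ((k : ℝ) / n) * ∑ s ∈ Finset.range T, p s ω := by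
      unfold RF
      rw [Finset.mul_sum]
      refine Finset.sum_congr rfl fun s _ => ?_
      simp only [hpdef]
      field_simp
    rw [hmass, hR] at hω
    have h14 : (14 : ℝ) * k * mm / n = ((k : ℝ) / n) * (14 * mm) := by ring
    rw [h14] at hω
    have h2 : ((k : ℝ) / n) * (∑ s ∈ Finset.range T, x s ω)
        < ((k : ℝ) / n) * ((∑ s ∈ Finset.range T, p s ω) / 2 - 14 * mm) := by
      rw [mul_sub]
      calc ((k : ℝ) / n) * (∑ s ∈ Finset.range T, x s ω)
          < ((k : ℝ) / n) * (∑ s ∈ Finset.range T, p s ω) / 2 - ((k : ℝ) / n) * (14 * mm) :=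
            by linarith
        _ = ((k : ℝ) / n) * ((∑ s ∈ Finset.range T, p s ω) / 2)
            - ((k : ℝ) / n) * (14 * mm) := by ring
    have hX : ∑ s ∈ Finset.range T, x s ω
        < (∑ s ∈ Finset.range T, p s ω) / 2 - 14 * mm :=
      (mul_lt_mul_iff_right₀ hknR).mp h2
    have hsum' : ∑ s ∈ Finset.range T, (p s ω / 2 - x s ω)
        = (∑ s ∈ Finset.range T, p s ω) / 2 - ∑ s ∈ Finset.range T, x s ω := by
      rw [Finset.sum_sub_distrib, Finset.sum_div]
    simp only [hW]
    refine Real.exp_le_exp.2 ?_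
    rw [hsum']
    linarith
  calc μ {ω | MassF J ν c T ω < RF Q J ν c T ω / 2 - 14 * k * mm / n}
      ≤ μ {ω | Real.exp (14 * (mm : ℝ)) ≤ W ω} := measure_mono hsub
    _ ≤ ENNReal.ofReal (Real.exp (-(14 * (mm : ℝ)))) := by
        have hfin : μ {ω | Real.exp (14 * (mm : ℝ)) ≤ W ω} ≠ ⊤ := measure_ne_top μ _
        rw [← ENNReal.ofReal_toReal hfin]
        refine ENNReal.ofReal_le_ofReal ?_
        have hεpos : (0 : ℝ) < Real.exp (14 * (mm : ℝ)) := Real.exp_pos _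
        have h1 : Real.exp (14 * (mm : ℝ))
            * (μ {ω | Real.exp (14 * (mm : ℝ)) ≤ W ω}).toReal ≤ 1 :=
          le_trans hmarkov hcore
        rw [Real.exp_neg, ← one_div, le_div_iff₀ hεpos]
        nlinarith [ENNReal.toReal_nonneg (a := μ {ω | Real.exp (14 * (mm : ℝ)) ≤ W ω})]

end Bad

section Pathwise

/-- `g'_j`: accumulated conditional mass on bins of load at least `j` over the first `N` rounds. -/
noncomputable def gqF (Q : ℕ → Ω → Fin n → ℝ) (J : ℕ → Ω → Fin n) (N j : ℕ) (ω : Ω) : ℝ :=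
  ∑ s ∈ Finset.range N, ∑ i, Q s ω i * hiI J j s i ω

/-- `Σ_{j+1}`: the double sum of products of conditional masses weighted by load-`≥ j` bins. -/
noncomputable def SSF (Q : ℕ → Ω → Fin n → ℝ) (J : ℕ → Ω → Fin n) (N j : ℕ) (ω : Ω) : ℝ :=
  ∑ s ∈ Finset.range N, ∑ r ∈ Finset.range s, ∑ i, Q s ω i * (Q r ω i * hiI J j r i ω)

variable {Q : ℕ → Ω → Fin n → ℝ} {J : ℕ → Ω → Fin n} {ω : Ω}

lemma gqF_nonneg (N j : ℕ) (hq0 : ∀ s i, 0 ≤ Q s ω i) : 0 ≤ gqF Q J N j ω := by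
  refine Finset.sum_nonneg fun s _ => Finset.sum_nonneg fun i _ => ?_
  exact mul_nonneg (hq0 s i) (hiI_nonneg _ _ _ _ _)

lemma SSF_nonneg (N j : ℕ) (hq0 : ∀ s i, 0 ≤ Q s ω i) : 0 ≤ SSF Q J N j ω := by
  refine Finset.sum_nonneg fun s _ => Finset.sum_nonneg fun r _ =>
    Finset.sum_nonneg fun i _ => ?_
  exact mul_nonneg (hq0 s i) (mul_nonneg (hq0 r i) (hiI_nonneg _ _ _ _ _))

lemma gqF_zero (N : ℕ) (hq1 : ∀ s, ∑ i, Q s ω i = 1) : gqF Q J N 0 ω = N := by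
  unfold gqF
  have : ∀ s, ∑ i, Q s ω i * hiI J 0 s i ω = 1 := by
    intro s
    rw [← hq1 s]
    refine Finset.sum_congr rfl fun i _ => ?_
    rw [hiI_zero, mul_one]
  rw [Finset.sum_congr rfl fun s _ => this s]
  simp

lemma hiI_top {ℓ N : ℕ} (hfail : ∀ i, binLoad J N i ω < ℓ) {s : ℕ} (hs : s ≤ N) (i : Fin n) :
    hiI J ℓ s i ω = 0 := by
  unfold hiI
  rw [if_neg]
  have h1 := binLoad_mono J hs i ω
  have h2 := hfail i
  omega

lemma gqF_top {ℓ N : ℕ} (hfail : ∀ i, binLoad J N i ω < ℓ) : gqF Q J N ℓ ω = 0 := by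
  unfold gqF
  refine Finset.sum_eq_zero fun s hs => Finset.sum_eq_zero fun i _ => ?_
  rw [hiI_top hfail (le_of_lt (Finset.mem_range.1 hs)) i, mul_zero]

lemma SSF_top {ℓ N : ℕ} (hfail : ∀ i, binLoad J N i ω < ℓ) : SSF Q J N ℓ ω = 0 := by
  unfold SSF
  refine Finset.sum_eq_zero fun s hs => Finset.sum_eq_zero fun r hr =>
    Finset.sum_eq_zero fun i _ => ?_
  have hrN : r ≤ N := by
    have := Finset.mem_range.1 hr; have := Finset.mem_range.1 hs; omega
  rw [hiI_top hfail hrN i, mul_zero, mul_zero]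

/-- The consequence of the good event at level `c+1`. -/
lemma P3 {N c : ℕ} {ε : ℝ}
    (hgood : ∀ s, s < N → RF Q J (Q s ω) c s ω / 2 - ε ≤ MassF J (Q s ω) c s ω) :
    SSF Q J N c ω ≤ 2 * gqF Q J N (c + 1) ω + SSF Q J N (c + 1) ω + 2 * N * ε := by
  have hmass : ∑ s ∈ Finset.range N, MassF J (Q s ω) c s ω = gqF Q J N (c + 1) ω := by
    unfold MassF gqF
    refine Finset.sum_congr rfl fun s _ => Finset.sum_congr rfl fun i _ => rfl
  have hRsum : ∑ s ∈ Finset.range N, RF Q J (Q s ω) c s ω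
      = SSF Q J N c ω - SSF Q J N (c + 1) ω := by
    unfold RF SSF
    rw [← Finset.sum_sub_distrib]
    refine Finset.sum_congr rfl fun s _ => ?_
    rw [← Finset.sum_sub_distrib]
    refine Finset.sum_congr rfl fun r _ => ?_
    rw [← Finset.sum_sub_distrib]
    refine Finset.sum_congr rfl fun i _ => ?_
    have := hiI_sub_eiI J c r i ω
    have heq : eiI J c r i ω = hiI J c r i ω - hiI J (c + 1) r i ω := by linarith
    rw [heq]
    ring
  have hsum : ∑ s ∈ Finset.range N, (RF Q J (Q s ω) c s ω / 2 - ε)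
      ≤ ∑ s ∈ Finset.range N, MassF J (Q s ω) c s ω :=
    Finset.sum_le_sum fun s hs => hgood s (Finset.mem_range.1 hs)
  rw [hmass] at hsum
  have hexp : ∑ s ∈ Finset.range N, (RF Q J (Q s ω) c s ω / 2 - ε)
      = (SSF Q J N c ω - SSF Q J N (c + 1) ω) / 2 - N * ε := by
    rw [Finset.sum_sub_distrib, ← Finset.sum_div, hRsum]
    simp [Finset.sum_const]
  rw [hexp] at hsum
  linarith

/-- Pathwise Cauchy–Schwarz lower bound for `SSF` in terms of `gqF`. -/
lemma P4 {N j : ℕ} {b : ℝ}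
    (hq0 : ∀ s i, 0 ≤ Q s ω i) (hqb : ∀ s i, Q s ω i ≤ b) :
    (gqF Q J N j ω) ^ 2 ≤ (n : ℝ) * b * gqF Q J N j ω + 2 * (n : ℝ) * SSF Q J N j ω := by
  set u : Fin n → ℝ := fun i => ∑ s ∈ Finset.range N, Q s ω i * hiI J j s i ω with hu
  have h1 : ∑ i, u i = gqF Q J N j ω := by
    simp only [hu]
    unfold gqF
    exact Finset.sum_comm
  have h2 : (∑ i, u i) ^ 2 ≤ (n : ℝ) * ∑ i, (u i) ^ 2 := by
    have := sq_sum_le_card_mul_sum_sq (s := (Finset.univ : Finset (Fin n))) (f := u)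
    simpa using this
  have h3 : ∀ i, (u i) ^ 2 = 2 * ∑ s ∈ Finset.range N, ∑ r ∈ Finset.range s,
      (Q s ω i * hiI J j s i ω) * (Q r ω i * hiI J j r i ω)
      + ∑ s ∈ Finset.range N, (Q s ω i * hiI J j s i ω) ^ 2 := by
    intro i
    exact sq_expand (fun s => Q s ω i * hiI J j s i ω) N
  have h4 : ∑ i, ∑ s ∈ Finset.range N, ∑ r ∈ Finset.range s,
      (Q s ω i * hiI J j s i ω) * (Q r ω i * hiI J j r i ω) ≤ SSF Q J N j ω := by
    unfold SSF
    rw [Finset.sum_comm]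
    refine Finset.sum_le_sum fun s _ => ?_
    rw [Finset.sum_comm]
    refine Finset.sum_le_sum fun r _ => ?_
    refine Finset.sum_le_sum fun i _ => ?_
    have hQhi : Q s ω i * hiI J j s i ω ≤ Q s ω i * 1 :=
      mul_le_mul_of_nonneg_left (hiI_le_one _ _ _ _ _) (hq0 s i)
    rw [mul_one] at hQhi
    refine mul_le_mul_of_nonneg_right hQhi ?_
    exact mul_nonneg (hq0 r i) (hiI_nonneg _ _ _ _ _)
  have h5 : ∑ i, ∑ s ∈ Finset.range N, (Q s ω i * hiI J j s i ω) ^ 2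
      ≤ b * gqF Q J N j ω := by
    unfold gqF
    rw [Finset.sum_comm, Finset.mul_sum]
    refine Finset.sum_le_sum fun s _ => ?_
    rw [Finset.mul_sum]
    refine Finset.sum_le_sum fun i _ => ?_
    have hv0 : 0 ≤ Q s ω i * hiI J j s i ω :=
      mul_nonneg (hq0 s i) (hiI_nonneg _ _ _ _ _)
    have hvb : Q s ω i * hiI J j s i ω ≤ b := by
      calc Q s ω i * hiI J j s i ω ≤ Q s ω i * 1 :=
            mul_le_mul_of_nonneg_left (hiI_le_one _ _ _ _ _) (hq0 s i)
        _ ≤ b := by rw [mul_one]; exact hqb s i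
    calc (Q s ω i * hiI J j s i ω) ^ 2
        = (Q s ω i * hiI J j s i ω) * (Q s ω i * hiI J j s i ω) := sq _
      _ ≤ b * (Q s ω i * hiI J j s i ω) := mul_le_mul_of_nonneg_right hvb hv0
  calc (gqF Q J N j ω) ^ 2 = (∑ i, u i) ^ 2 := by rw [h1]
    _ ≤ (n : ℝ) * ∑ i, (u i) ^ 2 := h2
    _ = (n : ℝ) * (2 * (∑ i, ∑ s ∈ Finset.range N, ∑ r ∈ Finset.range s,
          (Q s ω i * hiI J j s i ω) * (Q r ω i * hiI J j r i ω))
          + ∑ i, ∑ s ∈ Finset.range N, (Q s ω i * hiI J j s i ω) ^ 2) := by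
        congr 1
        rw [Finset.sum_congr rfl fun i _ => h3 i, Finset.sum_add_distrib, Finset.mul_sum]
    _ ≤ (n : ℝ) * (2 * SSF Q J N j ω + b * gqF Q J N j ω) := by
        refine mul_le_mul_of_nonneg_left ?_ (Nat.cast_nonneg n)
        have h4' := h4
        have h5' := h5
        linarith
    _ = (n : ℝ) * b * gqF Q J N j ω + 2 * (n : ℝ) * SSF Q J N j ω := by ring

end Pathwise

section Chain

lemma keystep {A H SS C L KM nn : ℝ} (hA2 : A ^ 2 ≤ 4 * nn * SS)
    (hSb : SS ≤ 4 * H + 28 * C * KM) (hC : C ≤ L) (hC0 : 0 ≤ C)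
    (hH : 9000 * KM ≤ H) (hKM : 1 ≤ KM) (hL2 : 2 ≤ L) (hn0 : 0 < nn) :
    A ^ 2 ≤ 10 * nn * L * H := by
  have hH0 : 0 ≤ H := by linarith
  have f1 : 4 * nn * SS ≤ 4 * nn * (4 * H + 28 * C * KM) :=
    mul_le_mul_of_nonneg_left hSb (by linarith)
  have f3 : nn * (C * KM) ≤ nn * (L * KM) := by
    refine mul_le_mul_of_nonneg_left ?_ (by linarith)
    exact mul_le_mul_of_nonneg_right hC (by linarith)
  have f4 : 16 * (nn * H) ≤ 8 * L * (nn * H) := by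
    nlinarith [mul_nonneg hn0.le hH0]
  have f5 : 112 * (nn * (L * KM)) ≤ 2 * L * (nn * H) := by
    have : 0 ≤ (2 * L * nn) * (H - 56 * KM) := by
      refine mul_nonneg (by nlinarith) (by linarith)
    nlinarith
  nlinarith [f1, f3, f4, f5]

set_option maxHeartbeats 1000000 in
/-- The deterministic recursion: on the good event the quantities `g'_j = a j` and
`Σ_{j+1} = S j` cannot all be small, contradiction with `a 0 = n`. -/
lemma chain (n k m ℓ : ℕ) (hl : 1 ≤ ℓ) (hn : 3 ≤ n) (hk : 1 ≤ k) (hm : 1 ≤ m)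
    (hr : 900 * (20 * (ℓ : ℝ)) ^ (2 * (2 ^ ℓ - 1)) * ((k : ℝ) * m) ≤ n)
    (a S : ℕ → ℝ)
    (ha0 : ∀ j, 0 ≤ a j)
    (hP1 : a 0 = n) (hP2a : a ℓ = 0) (hP2b : S ℓ = 0)
    (hP3 : ∀ j, j < ℓ → S j ≤ 2 * a (j + 1) + S (j + 1) + 28 * ((k : ℝ) * m))
    (hP4 : ∀ j, (a j) ^ 2 ≤ (k : ℝ) * a j + 2 * (n : ℝ) * S j) : False := by
  set L : ℝ := (ℓ : ℝ) with hL
  set KM : ℝ := (k : ℝ) * m with hKM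
  have hL1 : 1 ≤ L := by rw [hL]; exact_mod_cast hl
  have hk1 : (1 : ℝ) ≤ k := by exact_mod_cast hk
  have hm1 : (1 : ℝ) ≤ m := by exact_mod_cast hm
  have hKM1 : 1 ≤ KM := by rw [hKM]; nlinarith
  have hkKM : (k : ℝ) ≤ KM := by rw [hKM]; nlinarith
  have hnR : (3 : ℝ) ≤ n := by exact_mod_cast hn
  have hnpos : (0 : ℝ) < n := by linarith
  have hbase : (20 : ℝ) ≤ 20 * L := by nlinarith
  have hbase1 : (1 : ℝ) ≤ 20 * L := by linarith
  have hbasepos : (0 : ℝ) < 20 * L := by linarith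
  set h : ℕ → ℝ := fun j => ((n : ℝ) / 2) / (20 * L) ^ (2 ^ j - 1) with hh
  have hpowpos : ∀ j : ℕ, (0 : ℝ) < (20 * L) ^ (2 ^ j - 1) := fun j => pow_pos hbasepos _
  have hhpos : ∀ j, 0 < h j := by
    intro j; simp only [hh]
    exact div_pos (by linarith) (hpowpos j)
  have htwopow : ∀ j : ℕ, 1 ≤ 2 ^ j := fun j => Nat.one_le_two_pow
  have hYge : ∀ j : ℕ, (20 : ℝ) ≤ (20 * L) ^ (2 ^ j) := by
    intro j
    calc (20 : ℝ) ≤ 20 * L := hbase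
      _ ≤ (20 * L) ^ (2 ^ j) := le_self_pow₀ hbase1 (by have := htwopow j; omega)
  have hsplit : ∀ j : ℕ, h (j + 1) = h j / (20 * L) ^ (2 ^ j) := by
    intro j
    have he : 2 ^ (j + 1) - 1 = (2 ^ j - 1) + 2 ^ j := by
      have := htwopow j
      have h2 : 2 ^ (j + 1) = 2 ^ j + 2 ^ j := by ring
      omega
    simp only [hh]
    rw [he, pow_add]
    conv_rhs => rw [div_div]
  have hstep : ∀ j, 20 * h (j + 1) ≤ h j := by
    intro j
    rw [hsplit j]
    have hY : (0 : ℝ) < (20 * L) ^ (2 ^ j) := pow_pos hbasepos _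
    have heq : 20 * (h j / (20 * L) ^ (2 ^ j)) = h j * (20 / (20 * L) ^ (2 ^ j)) := by
      ring
    rw [heq]
    have h20Y : 20 / (20 * L) ^ (2 ^ j) ≤ 1 := (div_le_one hY).2 (hYge j)
    nlinarith [hhpos j]
  have hmono : ∀ i j : ℕ, i ≤ j → h j ≤ h i := by
    intro i j hij
    refine antitone_nat_of_succ_le (fun j => ?_) hij
    have := hstep j
    have := hhpos (j + 1)
    linarith
  have hsq : ∀ j, (h j) ^ 2 = 10 * n * L * h (j + 1) := by
    intro j
    have he : 2 ^ (j + 1) - 1 = (2 ^ j - 1) * 2 + 1 := by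
      have := htwopow j
      have h2 : 2 ^ (j + 1) = 2 ^ j + 2 ^ j := by ring
      omega
    simp only [hh]
    rw [he, pow_add, pow_mul, pow_one]
    have hX := hpowpos j
    field_simp
    ring
  have hhl : 9000 * KM ≤ h ℓ := by
    have he : 2 * (2 ^ ℓ - 1) = (2 ^ ℓ - 1) * 2 := by ring
    rw [he, pow_mul] at hr
    set P : ℝ := (20 * L) ^ (2 ^ ℓ - 1) with hP
    have hPpos : 0 < P := hpowpos ℓ
    have hP20 : (20 : ℝ) ≤ P := by
      rw [hP]
      calc (20 : ℝ) ≤ 20 * L := hbase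
        _ ≤ (20 * L) ^ (2 ^ ℓ - 1) := by
            refine le_self_pow₀ hbase1 ?_
            have h2 : 2 ≤ 2 ^ ℓ := by
              calc 2 = 2 ^ 1 := (pow_one 2).symm
                _ ≤ 2 ^ ℓ := Nat.pow_le_pow_right (by norm_num) hl
            omega
    have hKM0 : (0 : ℝ) ≤ KM := by linarith
    simp only [hh]
    rw [le_div_iff₀ hPpos]
    have hfact : 0 ≤ (900 * P * KM) * (P - 20) :=
      mul_nonneg (mul_nonneg (mul_nonneg (by norm_num) hPpos.le) hKM0) (by linarith)
    nlinarith [hr]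
  -- the downward induction
  have claim : ∀ d, d ≤ ℓ →
      (d < ℓ → a (ℓ - d) ≤ h (ℓ - d)) ∧ S (ℓ - d) ≤ 4 * h (ℓ - d + 1) + 28 * d * KM := by
    intro d
    induction d with
    | zero =>
      intro _
      constructor
      · intro _
        simp only [Nat.sub_zero]
        rw [hP2a]
        exact (hhpos ℓ).le
      · simp only [Nat.sub_zero]
        rw [hP2b]
        have := hhpos (ℓ + 1)
        push_cast
        linarith
    | succ d ih =>
      intro hd1
      have hdl : d < ℓ := by omega
      obtain ⟨iha, ihS⟩ := ih (le_of_lt hdl)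
      have hidx : ℓ - (d + 1) + 1 = ℓ - d := by omega
      have hidx2 : ℓ - (d + 1) < ℓ := by omega
      have haj : a (ℓ - d) ≤ h (ℓ - d) := iha hdl
      have hSpart : S (ℓ - (d + 1)) ≤ 4 * h (ℓ - (d + 1) + 1) + 28 * (d + 1 : ℕ) * KM := by
        have h3 := hP3 (ℓ - (d + 1)) hidx2
        rw [hidx] at h3
        have hh2 : 20 * h (ℓ - d + 1) ≤ h (ℓ - d) := hstep (ℓ - d)
        rw [hidx]
        push_cast
        push_cast at ihS
        have := hhpos (ℓ - d + 1)
        linarith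
      refine ⟨?_, hSpart⟩
      intro hd1'
      set j' : ℕ := ℓ - (d + 1) with hj'
      have hj1 : 1 ≤ j' := by omega
      have hL2 : (2 : ℝ) ≤ L := by
        rw [hL]
        have h2 : 2 ≤ ℓ := by omega
        exact_mod_cast h2
      by_contra hcon
      push_neg at hcon
      have hhj' : h j' < a j' := hcon
      have hhge : 9000 * KM ≤ h j' := le_trans hhl (hmono j' ℓ (by omega))
      have hage : 9000 * KM < a j' := lt_of_le_of_lt hhge hhj'
      have hk2 : (k : ℝ) ≤ a j' / 2 := by linarith
      have hP4' := hP4 j'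
      have hsq' : (a j') ^ 2 ≤ 4 * (n : ℝ) * S j' := by
        nlinarith [mul_nonneg (sub_nonneg.2 hk2) (ha0 j')]
      have hSb : S j' ≤ 4 * h (j' + 1) + 28 * (d + 1 : ℕ) * KM := hSpart
      have hcast : ((d + 1 : ℕ) : ℝ) ≤ L := by
        rw [hL]
        have h2 : d + 1 ≤ ℓ := by omega
        exact_mod_cast h2
      have hhj1 : 9000 * KM ≤ h (j' + 1) := le_trans hhl (hmono (j' + 1) ℓ (by omega))
      have hfinal : (a j') ^ 2 ≤ (h j') ^ 2 := by
        rw [hsq j']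
        exact keystep hsq' hSb hcast (Nat.cast_nonneg _) hhj1 hKM1 hL2 hnpos
      nlinarith [hhpos j', ha0 j']
  -- conclusion
  obtain ⟨_, hS0f⟩ := claim ℓ le_rfl
  simp only [Nat.sub_self] at hS0f
  have hP40 := hP4 0
  rw [hP1] at hP40
  have hn' : (n : ℝ) * n ≤ n * (k + 2 * S 0) := by nlinarith [hP40]
  have hn0 : (n : ℝ) ≤ k + 2 * S 0 := le_of_mul_le_mul_left hn' hnpos
  have hh1 : h 1 = (n : ℝ) / 2 / (20 * L) := by
    simp only [hh]
    norm_num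
  have hLKM : 57 * L * KM ≤ (n : ℝ) / 6000 := by
    have h2 : 2 ≤ 2 ^ ℓ := by
      calc 2 = 2 ^ 1 := (pow_one 2).symm
        _ ≤ 2 ^ ℓ := Nat.pow_le_pow_right (by norm_num) hl
    have hp2 : (20 * L) ^ 2 ≤ (20 * L) ^ (2 * (2 ^ ℓ - 1)) := by
      refine pow_le_pow_right₀ hbase1 ?_
      omega
    have hKM0 : (0 : ℝ) ≤ KM := by linarith
    have h400 : 900 * (400 * L ^ 2) * KM ≤ n := by
      calc 900 * (400 * L ^ 2) * KM = 900 * (20 * L) ^ 2 * KM := by ring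
        _ ≤ 900 * (20 * L) ^ (2 * (2 ^ ℓ - 1)) * KM := by nlinarith
        _ ≤ n := hr
    nlinarith [mul_nonneg (mul_nonneg (by norm_num : (0:ℝ) ≤ 57) (by linarith : (0:ℝ) ≤ L)) hKM0,
      mul_nonneg hKM0 (by nlinarith : (0:ℝ) ≤ L * (L - 1))]
  have h8h1 : 8 * h 1 ≤ (n : ℝ) / 5 := by
    rw [hh1]
    have heq : (8 : ℝ) * ((n : ℝ) / 2 / (20 * L)) = (n : ℝ) / (5 * L) := by
      field_simp
      ring
    rw [heq]
    rw [div_le_div_iff₀ (by positivity) (by norm_num : (0:ℝ) < 5)]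
    nlinarith
  have hfin : (n : ℝ) ≤ k + 8 * h 1 + 56 * L * KM := by
    push_cast at hS0f
    linarith
  have hkle : (k : ℝ) ≤ L * KM := by nlinarith
  nlinarith
end Chain

end ULLB

open ULLB in
set_option maxHeartbeats 2000000 in
/-- The unbounded-load part of Theorem 3 of the paper: there is an absolute constant
`A > 0` such that for all sufficiently large `n`, in the relaxed adaptive allocation
model with `n` balls and `n` bins, pool of at most `2^m` strategies (each with point
masses at most `k/n`) and `m ≥ log n`, for every positive integer `ℓ` satisfying
`30 (20ℓ)^(2^ℓ - 1) ≤ min √(n/(km)) √(n/(ℓ log n))`, the maximal load after `n` rounds is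
at least `ℓ` with probability at least `1 - A ℓ n⁻⁴`. -/
theorem unbounded_load_lower_bound :
    ∃ A : ℝ, 0 < A ∧ ∃ n₀ : ℕ, ∀ n : ℕ, n₀ ≤ n → ∀ k m : ℕ, Real.log n ≤ m →
    ∀ (Ω : Type) (_ : MeasurableSpace Ω) (μ : Measure Ω), IsProbabilityMeasure μ →
    ∀ (ℱ : Filtration ℕ ‹MeasurableSpace Ω›)
      (pool : Finset (Fin n → ℝ)), pool.card ≤ 2 ^ m →
      (∀ ν ∈ pool, ∀ i, 0 ≤ ν i) →
      (∀ ν ∈ pool, ∑ i, ν i = 1) →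
      (∀ ν ∈ pool, ∀ i, ν i ≤ (k : ℝ) / n) →
    ∀ (Q : ℕ → Ω → Fin n → ℝ) (J : ℕ → Ω → Fin n),
      (∀ t ω, Q t ω ∈ pool) →
      (∀ t i, Measurable[ℱ t] fun ω => Q t ω i) →
      (∀ t, Measurable[ℱ (t + 1)] (J t)) →
      (∀ t i, (μ[(fun ω => if J t ω = i then (1 : ℝ) else 0) | ℱ t])
          =ᵐ[μ] fun ω => Q t ω i) →
    ∀ ℓ : ℕ, 1 ≤ ℓ →
      30 * (20 * (ℓ : ℝ)) ^ (2 ^ ℓ - 1)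
        ≤ min (Real.sqrt ((n : ℝ) / ((k : ℝ) * m)))
            (Real.sqrt ((n : ℝ) / (ℓ * Real.log n))) →
      1 - A * ℓ / (n : ℝ) ^ 4 ≤ (μ {ω | ∃ i, ℓ ≤ binLoad J n i ω}).toReal := by
  refine ⟨1, one_pos, 3, ?_⟩
  intro n hn3 k m hlogm Ω mΩ μ hμ ℱ pool hcard hpos hsum hbd Q J hpool hQm hJm hQJ ℓ hℓ hmin
  have hn1 : 1 ≤ n := by omega
  have hnR : (3 : ℝ) ≤ n := by exact_mod_cast hn3
  have hnpos : (0 : ℝ) < n := by linarith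
  -- Ω is nonempty, hence the pool is nonempty and k ≥ 1
  have hΩ : Nonempty Ω := by
    by_contra hemp
    rw [not_nonempty_iff] at hemp
    have h0 : μ Set.univ = 0 := by
      rw [Set.univ_eq_empty_iff.2 hemp]
      exact measure_empty
    rw [measure_univ] at h0
    exact one_ne_zero h0
  obtain ⟨ω₀⟩ := hΩ
  have hν₀ : Q 0 ω₀ ∈ pool := hpool 0 ω₀
  have hk1 : 1 ≤ k := by
    by_contra hk0
    have hk00 : k = 0 := by omega
    have h1 : (1 : ℝ) = ∑ i, Q 0 ω₀ i := (hsum _ hν₀).symm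
    have h2 : ∑ i, Q 0 ω₀ i ≤ ∑ _i : Fin n, ((k : ℝ) / n) :=
      Finset.sum_le_sum fun i _ => hbd _ hν₀ i
    rw [hk00] at h2
    simp at h2
    linarith
  -- m ≥ 1
  have hlog3 : (1 : ℝ) < Real.log n := by
    rw [Real.lt_log_iff_exp_lt hnpos]
    calc Real.exp 1 < 2.7182818286 := Real.exp_one_lt_d9
      _ ≤ 3 := by norm_num
      _ ≤ n := hnR
  have hmR : (1 : ℝ) < m := lt_of_lt_of_le hlog3 hlogm
  have hm1 : 1 ≤ m := by
    by_contra hm0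
    have hm00 : m = 0 := by omega
    rw [hm00] at hmR
    norm_num at hmR
  have hkR : (1 : ℝ) ≤ k := by exact_mod_cast hk1
  have hmR' : (1 : ℝ) ≤ m := by exact_mod_cast hm1
  have hkmpos : (0 : ℝ) < (k : ℝ) * m := by nlinarith
  -- the key numeric hypothesis
  have hrmain : 900 * (20 * (ℓ : ℝ)) ^ (2 * (2 ^ ℓ - 1)) * ((k : ℝ) * m) ≤ n := by
    have h1 : 30 * (20 * (ℓ : ℝ)) ^ (2 ^ ℓ - 1)
        ≤ Real.sqrt ((n : ℝ) / ((k : ℝ) * m)) := le_trans hmin (min_le_left _ _)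
    have hLpos : (0 : ℝ) < 20 * (ℓ : ℝ) := by
      have hc : (1 : ℝ) ≤ ℓ := by exact_mod_cast hℓ
      nlinarith
    have h30 : (0 : ℝ) ≤ 30 * (20 * (ℓ : ℝ)) ^ (2 ^ ℓ - 1) := by positivity
    have h2 : (30 * (20 * (ℓ : ℝ)) ^ (2 ^ ℓ - 1)) ^ 2 ≤ (n : ℝ) / ((k : ℝ) * m) := by
      have hsq := pow_le_pow_left₀ h30 h1 2
      rwa [Real.sq_sqrt (by positivity)] at hsq
    have h3 : (30 * (20 * (ℓ : ℝ)) ^ (2 ^ ℓ - 1)) ^ 2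
        = 900 * (20 * (ℓ : ℝ)) ^ (2 * (2 ^ ℓ - 1)) := by
      rw [mul_pow, ← pow_mul, show (2 ^ ℓ - 1) * 2 = 2 * (2 ^ ℓ - 1) from by ring]
      norm_num
    rw [h3] at h2
    calc 900 * (20 * (ℓ : ℝ)) ^ (2 * (2 ^ ℓ - 1)) * ((k : ℝ) * m)
        ≤ ((n : ℝ) / ((k : ℝ) * m)) * ((k : ℝ) * m) :=
          mul_le_mul_of_nonneg_right h2 hkmpos.le
      _ = n := by field_simp
  -- the bad events
  set Bad : (Fin n → ℝ) → ℕ → ℕ → Set Ω := fun ν c T =>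
    {ω | MassF J ν c T ω < RF Q J ν c T ω / 2 - 14 * k * m / n} with hBad
  set U : Set Ω := ⋃ ν ∈ pool, ⋃ c ∈ Finset.range ℓ, ⋃ T ∈ Finset.range n, Bad ν c T with hU
  have hsubset : {ω | ∃ i, ℓ ≤ binLoad J n i ω}ᶜ ⊆ U := by
    intro ω hω
    by_contra hnot
    rw [hU] at hnot
    simp only [Set.mem_iUnion, not_exists] at hnot
    have hgood : ∀ ν ∈ pool, ∀ c < ℓ, ∀ T < n,
        RF Q J ν c T ω / 2 - 14 * k * m / n ≤ MassF J ν c T ω := by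
      intro ν hν c hc T hT
      have hB := hnot ν hν c (Finset.mem_range.2 hc) T (Finset.mem_range.2 hT)
      rw [hBad] at hB
      simp only [Set.mem_setOf_eq] at hB
      linarith
    have hfail : ∀ i, binLoad J n i ω < ℓ := by
      intro i
      by_contra hti
      push_neg at hti
      exact hω ⟨i, hti⟩
    have hq0 : ∀ s i, 0 ≤ Q s ω i := fun s i => hpos _ (hpool s ω) i
    have hq1 : ∀ s, ∑ i, Q s ω i = 1 := fun s => hsum _ (hpool s ω)
    have hqb : ∀ s i, Q s ω i ≤ (k : ℝ) / n := fun s i => hbd _ (hpool s ω) i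
    refine chain n k m ℓ hℓ hn3 hk1 hm1 hrmain
      (fun j => gqF Q J n j ω) (fun j => SSF Q J n j ω)
      (fun j => gqF_nonneg n j hq0) (gqF_zero n hq1) (gqF_top hfail) (SSF_top hfail)
      ?_ ?_
    · intro j hj
      have hgood' : ∀ s, s < n → RF Q J (Q s ω) j s ω / 2 - 14 * k * m / n
          ≤ MassF J (Q s ω) j s ω :=
        fun s hs => hgood (Q s ω) (hpool s ω) j hj s hs
      have hP3' := P3 (Q := Q) (J := J) (ω := ω) (N := n) (c := j) (ε := 14 * k * m / n) hgood'
      have heq : 2 * (n : ℝ) * (14 * k * m / n) = 28 * ((k : ℝ) * m) := by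
        field_simp
        ring
      linarith
    · intro j
      have hP4' := P4 (Q := Q) (J := J) (ω := ω) (N := n) (j := j) (b := (k : ℝ) / n) hq0 hqb
      have heq : (n : ℝ) * ((k : ℝ) / n) = k := by field_simp
      rw [heq] at hP4'
      exact hP4'
  -- measure of the union
  have hbadm : ∀ ν ∈ pool, ∀ (c T : ℕ),
      μ (Bad ν c T) ≤ ENNReal.ofReal (Real.exp (-(14 * (m : ℝ)))) := by
    intro ν hν c T
    rw [hBad]
    exact bad_bound ℱ pool (by omega) k m (by omega) hpos hsum hbd Q J hpool hQm hJm hQJ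
      ν hν c T
  have hUbound : μ U ≤ (pool.card : ENNReal) * ((ℓ : ENNReal) * ((n : ENNReal)
      * ENNReal.ofReal (Real.exp (-(14 * (m : ℝ)))))) := by
    rw [hU]
    calc μ (⋃ ν ∈ pool, ⋃ c ∈ Finset.range ℓ, ⋃ T ∈ Finset.range n, Bad ν c T)
        ≤ ∑ ν ∈ pool, μ (⋃ c ∈ Finset.range ℓ, ⋃ T ∈ Finset.range n, Bad ν c T) :=
          measure_biUnion_finset_le _ _
      _ ≤ ∑ _ν ∈ pool, ((ℓ : ENNReal) * ((n : ENNReal)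
            * ENNReal.ofReal (Real.exp (-(14 * (m : ℝ)))))) := by
          refine Finset.sum_le_sum fun ν hν => ?_
          calc μ (⋃ c ∈ Finset.range ℓ, ⋃ T ∈ Finset.range n, Bad ν c T)
              ≤ ∑ c ∈ Finset.range ℓ, μ (⋃ T ∈ Finset.range n, Bad ν c T) :=
                measure_biUnion_finset_le _ _
            _ ≤ ∑ _c ∈ Finset.range ℓ, ((n : ENNReal)
                  * ENNReal.ofReal (Real.exp (-(14 * (m : ℝ))))) := by
                refine Finset.sum_le_sum fun c _ => ?_
                calc μ (⋃ T ∈ Finset.range n, Bad ν c T)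
                    ≤ ∑ T ∈ Finset.range n, μ (Bad ν c T) :=
                      measure_biUnion_finset_le _ _
                  _ ≤ ∑ _T ∈ Finset.range n,
                        ENNReal.ofReal (Real.exp (-(14 * (m : ℝ)))) :=
                      Finset.sum_le_sum fun T _ => hbadm ν hν c T
                  _ = (n : ENNReal) * ENNReal.ofReal (Real.exp (-(14 * (m : ℝ)))) := by
                      rw [Finset.sum_const, Finset.card_range, nsmul_eq_mul]
            _ = (ℓ : ENNReal) * ((n : ENNReal)
                  * ENNReal.ofReal (Real.exp (-(14 * (m : ℝ))))) := by
                rw [Finset.sum_const, Finset.card_range, nsmul_eq_mul]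
      _ = (pool.card : ENNReal) * ((ℓ : ENNReal) * ((n : ENNReal)
            * ENNReal.ofReal (Real.exp (-(14 * (m : ℝ)))))) := by
          rw [Finset.sum_const, nsmul_eq_mul]
  -- the real bound
  have hreal : (pool.card : ℝ) * ((ℓ : ℝ) * ((n : ℝ) * Real.exp (-(14 * (m : ℝ)))))
      ≤ (ℓ : ℝ) / (n : ℝ) ^ 4 := by
    have he2 : (2 : ℝ) ≤ Real.exp 1 := by
      have := Real.add_one_le_exp 1
      linarith
    have hpool2 : (pool.card : ℝ) ≤ (2 : ℝ) ^ m := by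
      have hc : ((pool.card : ℕ) : ℝ) ≤ ((2 ^ m : ℕ) : ℝ) := by exact_mod_cast hcard
      simpa using hc
    have h2m : (2 : ℝ) ^ m ≤ Real.exp m := by
      calc (2 : ℝ) ^ m ≤ (Real.exp 1) ^ m := pow_le_pow_left₀ (by norm_num) he2 m
        _ = Real.exp m := by rw [← Real.exp_nat_mul]; norm_num
    have hexp13 : Real.exp (m : ℝ) * Real.exp (-(14 * (m : ℝ)))
        = Real.exp (-(13 * (m : ℝ))) := by
      rw [← Real.exp_add]
      ring_nf
    have hexp13' : Real.exp (-(13 * (m : ℝ))) ≤ Real.exp (-(13 * Real.log n)) := by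
      refine Real.exp_le_exp.2 ?_
      nlinarith [hlogm]
    have hexplog : Real.exp (-(13 * Real.log n)) = ((n : ℝ) ^ (13 : ℕ))⁻¹ := by
      rw [show -(13 * Real.log n) = (13 : ℕ) * (-Real.log n) from by push_cast; ring,
        Real.exp_nat_mul, Real.exp_neg, Real.exp_log hnpos, inv_pow]
    have hℓ0 : (0 : ℝ) ≤ ℓ := Nat.cast_nonneg ℓ
    have hexp0 : (0 : ℝ) < Real.exp (-(14 * (m : ℝ))) := Real.exp_pos _
    have key : (pool.card : ℝ) * ((ℓ : ℝ) * ((n : ℝ) * Real.exp (-(14 * (m : ℝ)))))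
        ≤ (ℓ : ℝ) * (n : ℝ) * Real.exp (-(13 * (m : ℝ))) := by
      rw [← hexp13]
      have step : (pool.card : ℝ) * Real.exp (-(14 * (m : ℝ)))
          ≤ Real.exp (m : ℝ) * Real.exp (-(14 * (m : ℝ))) :=
        mul_le_mul_of_nonneg_right (le_trans hpool2 h2m) hexp0.le
      nlinarith [mul_le_mul_of_nonneg_left step
        (mul_nonneg hℓ0 (by linarith : (0:ℝ) ≤ (n : ℝ)))]
    refine le_trans key ?_
    have step2 : Real.exp (-(13 * (m : ℝ))) ≤ ((n : ℝ) ^ (13 : ℕ))⁻¹ := by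
      rw [← hexplog]; exact hexp13'
    have hx : (n : ℝ) * ((n : ℝ) ^ (13 : ℕ))⁻¹ ≤ ((n : ℝ) ^ (4 : ℕ))⁻¹ := by
      rw [← div_eq_mul_inv, ← one_div, div_le_div_iff₀ (by positivity) (by positivity)]
      calc (n : ℝ) * (n : ℝ) ^ (4 : ℕ) = (n : ℝ) ^ (5 : ℕ) := by ring
        _ ≤ (n : ℝ) ^ (13 : ℕ) := pow_le_pow_right₀ (by linarith) (by norm_num)
        _ = 1 * (n : ℝ) ^ (13 : ℕ) := (one_mul _).symm
    calc (ℓ : ℝ) * (n : ℝ) * Real.exp (-(13 * (m : ℝ)))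
        ≤ (ℓ : ℝ) * (n : ℝ) * ((n : ℝ) ^ (13 : ℕ))⁻¹ :=
          mul_le_mul_of_nonneg_left step2 (mul_nonneg hℓ0 (by linarith))
      _ = (ℓ : ℝ) * ((n : ℝ) * ((n : ℝ) ^ (13 : ℕ))⁻¹) := by ring
      _ ≤ (ℓ : ℝ) * ((n : ℝ) ^ (4 : ℕ))⁻¹ := mul_le_mul_of_nonneg_left hx hℓ0
      _ = (ℓ : ℝ) / (n : ℝ) ^ 4 := by rw [div_eq_mul_inv]
  -- assemble
  set Sset : Set Ω := {ω | ∃ i, ℓ ≤ binLoad J n i ω} with hSset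
  have hmeasS : MeasurableSet Sset := by
    have heq : Sset = ⋃ i : Fin n, {ω | ℓ ≤ binLoad J n i ω} := by
      ext ω; simp [hSset, Set.mem_iUnion]
    rw [heq]
    refine MeasurableSet.iUnion fun i => ?_
    have hb : Measurable fun ω => binLoad J n i ω :=
      (meas_binLoad ℱ J hJm n i).mono (ℱ.le n) le_rfl
    exact hb measurableSet_Ici
  have hcompl : μ Ssetᶜ ≤ ENNReal.ofReal ((ℓ : ℝ) / (n : ℝ) ^ 4) := by
    refine le_trans (le_trans (measure_mono hsubset) hUbound) ?_
    calc (pool.card : ENNReal) * ((ℓ : ENNReal) * ((n : ENNReal)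
          * ENNReal.ofReal (Real.exp (-(14 * (m : ℝ))))))
        = ENNReal.ofReal ((pool.card : ℝ) * ((ℓ : ℝ) * ((n : ℝ)
            * Real.exp (-(14 * (m : ℝ)))))) := by
          rw [ENNReal.ofReal_mul (Nat.cast_nonneg _),
            ENNReal.ofReal_mul (Nat.cast_nonneg _),
            ENNReal.ofReal_mul (Nat.cast_nonneg _),
            ENNReal.ofReal_natCast, ENNReal.ofReal_natCast, ENNReal.ofReal_natCast]
      _ ≤ ENNReal.ofReal ((ℓ : ℝ) / (n : ℝ) ^ 4) := ENNReal.ofReal_le_ofReal hreal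
  have hμS : (μ Sset).toReal = 1 - (μ Ssetᶜ).toReal := by
    have h1 : μ Ssetᶜᶜ = 1 - μ Ssetᶜ := prob_compl_eq_one_sub hmeasS.compl
    rw [compl_compl] at h1
    rw [h1, ENNReal.toReal_sub_of_le prob_le_one ENNReal.one_ne_top, ENNReal.toReal_one]
  have hcompl' : (μ Ssetᶜ).toReal ≤ (ℓ : ℝ) / (n : ℝ) ^ 4 :=
    ENNReal.toReal_le_of_le_ofReal (by positivity) hcompl
  rw [hμS, one_mul]
  linarith
end

section
/- Let Q_1, …, Q_t be probability distributions on n bins with Q_s(i) ≤ k/n for every s and every bin i, and let q ≥ 1 be an integer. Define V_t^{1;q} = Σ_{s_1 < ⋯ < s_q ≤ t} Σ_{i=1}^n Q_{s_1}(i)·Q_{s_2}(i)···Q_{s_q}(i). Then for any fixed α > 0 with t > (1+α)·k·q, one has V_t^{1;q} ≥ (t − (1+α)·k·q)^q / (e^{q/(2α)} · n^{q−1} · q!). -/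
open Finset

/-- Double counting: `(q+1) e_{q+1}(T) = ∑_{r∈T} x_r e_q(T \ {r})`. -/
lemma double_count (x : ℕ → ℝ) (T : Finset ℕ) (q : ℕ) :
    ∑ r ∈ T, x r * ∑ S ∈ (T.erase r).powersetCard q, ∏ s ∈ S, x s
      = ((q : ℝ) + 1) * ∑ S ∈ T.powersetCard (q + 1), ∏ r ∈ S, x r := by
  have L : ∑ r ∈ T, x r * ∑ S ∈ (T.erase r).powersetCard q, ∏ s ∈ S, x s
      = ∑ p ∈ T.sigma (fun r => (T.erase r).powersetCard q), ∏ s ∈ insert p.1 p.2, x s := by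
    rw [Finset.sum_sigma]
    refine Finset.sum_congr rfl fun r hr => ?_
    rw [Finset.mul_sum]
    refine Finset.sum_congr rfl fun S hS => ?_
    rw [Finset.mem_powersetCard] at hS
    rw [Finset.prod_insert (fun h => (Finset.mem_erase.1 (hS.1 h)).1 rfl)]
  have R : ((q : ℝ) + 1) * ∑ S ∈ T.powersetCard (q + 1), ∏ r ∈ S, x r
      = ∑ p ∈ (T.powersetCard (q + 1)).sigma (fun U => U), ∏ s ∈ p.1, x s := by
    rw [Finset.sum_sigma, Finset.mul_sum]
    refine Finset.sum_congr rfl fun U hU => ?_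
    show ((q : ℝ) + 1) * ∏ r ∈ U, x r = ∑ _s ∈ U, ∏ r ∈ U, x r
    rw [Finset.sum_const, nsmul_eq_mul, (Finset.mem_powersetCard.1 hU).2]
    push_cast; ring
  rw [L, R]
  refine Finset.sum_nbij' (fun p => ⟨insert p.1 p.2, p.1⟩) (fun p => ⟨p.2, p.1.erase p.2⟩)
    ?_ ?_ ?_ ?_ ?_
  · rintro ⟨r, S⟩ hp
    rw [Finset.mem_sigma] at hp ⊢
    obtain ⟨hr, hS⟩ := hp
    rw [Finset.mem_powersetCard] at hS
    have hrS : r ∉ S := fun h => (Finset.mem_erase.1 (hS.1 h)).1 rfl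
    refine ⟨Finset.mem_powersetCard.2 ⟨?_, ?_⟩, Finset.mem_insert_self _ _⟩
    · exact Finset.insert_subset hr (hS.1.trans (Finset.erase_subset _ _))
    · rw [Finset.card_insert_of_notMem hrS, hS.2]
  · rintro ⟨U, r⟩ hp
    rw [Finset.mem_sigma] at hp ⊢
    obtain ⟨hU, hr⟩ := hp
    rw [Finset.mem_powersetCard] at hU
    refine ⟨hU.1 hr, Finset.mem_powersetCard.2 ⟨?_, ?_⟩⟩
    · exact Finset.erase_subset_erase _ hU.1
    · rw [Finset.card_erase_of_mem hr, hU.2]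
      omega
  · rintro ⟨r, S⟩ hp
    rw [Finset.mem_sigma] at hp
    have hS := Finset.mem_powersetCard.1 hp.2
    have hrS : r ∉ S := fun h => (Finset.mem_erase.1 (hS.1 h)).1 rfl
    simp [Finset.erase_insert hrS]
  · rintro ⟨U, r⟩ hp
    rw [Finset.mem_sigma] at hp
    simp [Finset.insert_erase hp.2]
  · rintro ⟨r, S⟩ _; rfl

/-- Key lower bound on elementary symmetric sums: if `0 ≤ x_r ≤ M` then
`e_q(T) ≥ max(P - (q-1)M, 0)^q / q!` where `P = ∑_{r∈T} x_r`. -/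
lemma esymm_lower (M : ℝ) (hM : 0 ≤ M) (x : ℕ → ℝ) (hx : ∀ r, 0 ≤ x r)
    (hxM : ∀ r, x r ≤ M) :
    ∀ (q : ℕ) (T : Finset ℕ),
      (max ((∑ r ∈ T, x r) - ((q : ℝ) - 1) * M) 0) ^ q / (Nat.factorial q : ℝ)
        ≤ ∑ S ∈ T.powersetCard q, ∏ r ∈ S, x r := by
  intro q
  induction q with
  | zero => intro T; simp
  | succ q ih =>
    intro T
    set P : ℝ := ∑ r ∈ T, x r with hP
    have hPnn : 0 ≤ P := Finset.sum_nonneg fun r _ => hx r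
    set m : ℝ := max (P - (q : ℝ) * M) 0 with hm
    have hmnn : 0 ≤ m := le_max_right _ _
    have hmP : m ≤ P := max_le (by nlinarith [Nat.cast_nonneg (α := ℝ) q]) hPnn
    have hfq : (0 : ℝ) < (Nat.factorial q : ℝ) := by positivity
    have h1 : ∀ r ∈ T, m ^ q / (Nat.factorial q : ℝ)
        ≤ ∑ S ∈ (T.erase r).powersetCard q, ∏ s ∈ S, x s := by
      intro r hr
      refine le_trans ?_ (ih (T.erase r))
      have hsum : ∑ s ∈ (T.erase r), x s = P - x r := by
        rw [hP, Finset.sum_erase_eq_sub hr]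
      rw [hsum]
      have hle : m ≤ max ((P - x r) - ((q : ℝ) - 1) * M) 0 := by
        apply max_le_max _ le_rfl
        nlinarith [hxM r, hx r]
      gcongr
    have h2 : m * (m ^ q / (Nat.factorial q : ℝ))
        ≤ ((q : ℝ) + 1) * ∑ S ∈ T.powersetCard (q + 1), ∏ r ∈ S, x r := by
      rw [← double_count x T q]
      calc m * (m ^ q / (Nat.factorial q : ℝ))
          ≤ P * (m ^ q / (Nat.factorial q : ℝ)) := by
            exact mul_le_mul_of_nonneg_right hmP (by positivity)
        _ = ∑ r ∈ T, x r * (m ^ q / (Nat.factorial q : ℝ)) := by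
            rw [← Finset.sum_mul]
        _ ≤ ∑ r ∈ T, x r * ∑ S ∈ (T.erase r).powersetCard q, ∏ s ∈ S, x s :=
            Finset.sum_le_sum fun r hr => mul_le_mul_of_nonneg_left (h1 r hr) (hx r)
    have hcast : ((q : ℝ) + 1) - 1 = (q : ℝ) := by ring
    have hcast2 : (((q + 1 : ℕ) : ℝ) - 1) = (q : ℝ) := by push_cast; ring
    rw [hcast2, ← hm]
    have hfact : ((Nat.factorial (q + 1) : ℕ) : ℝ)
        = ((q : ℝ) + 1) * (Nat.factorial q : ℝ) := by
      rw [Nat.factorial_succ]; push_cast; ring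
    rw [hfact, div_le_iff₀ (by positivity)]
    have h3 : m ^ (q + 1) = m * (m ^ q / (Nat.factorial q : ℝ)) * (Nat.factorial q : ℝ) := by
      field_simp
      ring
    calc m ^ (q + 1)
        = m * (m ^ q / (Nat.factorial q : ℝ)) * (Nat.factorial q : ℝ) := h3
      _ ≤ (((q : ℝ) + 1) * ∑ S ∈ T.powersetCard (q + 1), ∏ r ∈ S, x r)
            * (Nat.factorial q : ℝ) := mul_le_mul_of_nonneg_right h2 hfq.le
      _ = (∑ S ∈ T.powersetCard (q + 1), ∏ r ∈ S, x r)
            * (((q : ℝ) + 1) * (Nat.factorial q : ℝ)) := by ring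

/-- Lemma 5.2 of the paper: if `Q 0, …, Q (t-1)` are probability vectors on `n` bins with
all entries at most `k/n`, then the expected number of `q`-collisions
`V_t^{1;q} = ∑_{s₁<⋯<s_q≤t} ∑_i Q_{s₁}(i)⋯Q_{s_q}(i)` satisfies, for any `α > 0` with
`t > (1+α) k q`, the lower bound `(t - (1+α)kq)^q / (e^{q/(2α)} n^{q-1} q!)`. -/
theorem lemma_Vt_packing
    (n k t q : ℕ) (hn : 0 < n) (hq : 1 ≤ q)
    (Q : ℕ → Fin n → ℝ)
    (hQ_nonneg : ∀ s i, 0 ≤ Q s i)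
    (hQ_sum : ∀ s, ∑ i, Q s i = 1)
    (hQ_bd : ∀ s i, Q s i ≤ (k : ℝ) / n)
    (α : ℝ) (hα : 0 < α)
    (ht : (1 + α) * k * q < t) :
    ((t : ℝ) - (1 + α) * k * q) ^ q
        / (Real.exp (q / (2 * α)) * (n : ℝ) ^ (q - 1) * (Nat.factorial q : ℝ))
      ≤ ∑ s ∈ Finset.powersetCard q (Finset.range t), ∑ i, ∏ r ∈ s, Q r i := by
  have hn' : (0 : ℝ) < n := by exact_mod_cast hn
  have hk : (0 : ℝ) ≤ k := Nat.cast_nonneg k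
  have hq' : (1 : ℝ) ≤ q := by exact_mod_cast hq
  set B : ℝ := (t : ℝ) - (1 + α) * k * q with hB
  have hBpos : 0 < B := by rw [hB]; linarith
  set M : ℝ := (k : ℝ) / n with hM
  have hMnn : 0 ≤ M := by positivity
  -- per-bin bound
  set R : Fin n → ℝ := fun i => max ((∑ s ∈ Finset.range t, Q s i) - ((q : ℝ) - 1) * M) 0
    with hR
  have hswap : ∑ s ∈ Finset.powersetCard q (Finset.range t), ∑ i, ∏ r ∈ s, Q r i
      = ∑ i, ∑ s ∈ Finset.powersetCard q (Finset.range t), ∏ r ∈ s, Q r i :=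
    Finset.sum_comm
  have hbin : ∀ i : Fin n, R i ^ q / (Nat.factorial q : ℝ)
      ≤ ∑ s ∈ Finset.powersetCard q (Finset.range t), ∏ r ∈ s, Q r i := by
    intro i
    exact esymm_lower M hMnn (fun s => Q s i) (fun s => hQ_nonneg s i)
      (fun s => hQ_bd s i) q (Finset.range t)
  have hRnn : ∀ i, 0 ≤ R i := fun i => le_max_right _ _
  -- sum of R
  have hRsum : B ≤ ∑ i, R i := by
    have h1 : ∀ i : Fin n, (∑ s ∈ Finset.range t, Q s i) - ((q : ℝ) - 1) * M ≤ R i :=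
      fun i => le_max_left _ _
    have h2 : (∑ i : Fin n, ∑ s ∈ Finset.range t, Q s i)
        - (n : ℝ) * (((q : ℝ) - 1) * M) ≤ ∑ i, R i := by
      have := Finset.sum_le_sum fun i (_ : i ∈ Finset.univ) => h1 i
      rw [Finset.sum_sub_distrib, Finset.sum_const, Finset.card_univ,
        Fintype.card_fin, nsmul_eq_mul] at this
      exact this
    have h3 : (∑ i : Fin n, ∑ s ∈ Finset.range t, Q s i) = (t : ℝ) := by
      rw [Finset.sum_comm]
      simp [hQ_sum]
    rw [h3] at h2
    have h4 : (n : ℝ) * (((q : ℝ) - 1) * M) = ((q : ℝ) - 1) * k := by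
      rw [hM]; field_simp
    rw [h4] at h2
    refine le_trans ?_ h2
    have hkq : (0 : ℝ) ≤ α * ((k : ℝ) * q) := mul_nonneg hα.le (mul_nonneg hk (Nat.cast_nonneg q))
    rw [hB]
    nlinarith [hkq, hk]
  -- Jensen step
  have hqq : q - 1 + 1 = q := Nat.sub_add_cancel hq
  have hjensen : (∑ i, R i) ^ q / (n : ℝ) ^ (q - 1) ≤ ∑ i, R i ^ q := by
    have h := pow_sum_div_card_le_sum_pow (s := (Finset.univ : Finset (Fin n)))
      (f := R) (fun i _ => hRnn i) (q - 1)
    rw [hqq, Finset.card_univ, Fintype.card_fin] at h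
    exact h
  have hE : (1 : ℝ) ≤ Real.exp ((q : ℝ) / (2 * α)) := Real.one_le_exp (by positivity)
  have hfq : (0 : ℝ) < (Nat.factorial q : ℝ) := by positivity
  have hd1 : (0 : ℝ) < (n : ℝ) ^ (q - 1) * (Nat.factorial q : ℝ) := by positivity
  have hd2 : (n : ℝ) ^ (q - 1) * (Nat.factorial q : ℝ)
      ≤ Real.exp ((q : ℝ) / (2 * α)) * (n : ℝ) ^ (q - 1) * (Nat.factorial q : ℝ) := by
    nlinarith [hE, hd1]
  calc B ^ q / (Real.exp ((q : ℝ) / (2 * α)) * (n : ℝ) ^ (q - 1) * (Nat.factorial q : ℝ))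
      ≤ B ^ q / ((n : ℝ) ^ (q - 1) * (Nat.factorial q : ℝ)) :=
        div_le_div_of_nonneg_left (pow_nonneg hBpos.le q) hd1 hd2
    _ ≤ (∑ i, R i) ^ q / ((n : ℝ) ^ (q - 1) * (Nat.factorial q : ℝ)) := by
        gcongr
    _ = ((∑ i, R i) ^ q / (n : ℝ) ^ (q - 1)) / (Nat.factorial q : ℝ) := by
        rw [div_div]
    _ ≤ (∑ i, R i ^ q) / (Nat.factorial q : ℝ) := by gcongr
    _ = ∑ i, R i ^ q / (Nat.factorial q : ℝ) := Finset.sum_div _ _ _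
    _ ≤ ∑ i, ∑ s ∈ Finset.powersetCard q (Finset.range t), ∏ r ∈ s, Q r i :=
        Finset.sum_le_sum fun i _ => hbin i
    _ = ∑ s ∈ Finset.powersetCard q (Finset.range t), ∑ i, ∏ r ∈ s, Q r i := hswap.symm
end

section
/- Let J_1, …, J_n be independent random variables, where J_t takes values in the set of bins {1,…,n} with an arbitrary distribution Q_t, and let N(i) = #{t ≤ n : J_t = i} denote the load of bin i. For a nonnegative integer a, let A_i be the event {N(i) ≤ a}. Then for every subset S of bins, P( ∩_{i∈S} A_i ) ≤ ∏_{i∈S} P(A_i); that is, the events that individual bins have small load are negatively correlated. -/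
open Finset

/-- count of balls in bin `i` -/
private def cntSL {n m : ℕ} (f : Fin m → Fin n) (i : Fin n) : ℕ :=
  (Finset.univ.filter fun t => f t = i).card

/-- probability that all bins in `S` have load at most `a i` -/
private def GSL {n : ℕ} (m : ℕ) (p : Fin m → Fin n → ℝ) (S : Finset (Fin n))
    (a : Fin n → ℕ) : ℝ :=
  ∑ f : Fin m → Fin n, (if ∀ i ∈ S, cntSL f i ≤ a i then ∏ t, p t (f t) else 0)

private lemma cntSL_cons {n m : ℕ} (j : Fin n) (f : Fin m → Fin n) (i : Fin n) :
    cntSL (Fin.cons j f) i = (if j = i then 1 else 0) + cntSL f i := by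
  simp only [cntSL, Finset.card_filter, Fin.sum_univ_succ, Fin.cons_zero, Fin.cons_succ]

private lemma GSL_nonneg {n m : ℕ} {p : Fin m → Fin n → ℝ} (hp : ∀ t j, 0 ≤ p t j)
    (S : Finset (Fin n)) (a : Fin n → ℕ) : 0 ≤ GSL m p S a := by
  refine Finset.sum_nonneg fun f _ => ?_
  split_ifs
  · exact Finset.prod_nonneg fun t _ => hp t _
  · exact le_refl 0

private lemma GSL_congr {n m : ℕ} (p : Fin m → Fin n → ℝ) {S : Finset (Fin n)}
    {a a' : Fin n → ℕ} (h : ∀ i ∈ S, a i = a' i) : GSL m p S a = GSL m p S a' := by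
  refine Finset.sum_congr rfl fun f _ => ?_
  have : (∀ i ∈ S, cntSL f i ≤ a i) ↔ (∀ i ∈ S, cntSL f i ≤ a' i) := by
    constructor <;> intro hh i hi <;> [rw [← h i hi]; rw [h i hi]] <;> exact hh i hi
  simp only [this]

private lemma GSL_mono {n m : ℕ} {p : Fin m → Fin n → ℝ} (hp : ∀ t j, 0 ≤ p t j)
    {S : Finset (Fin n)} {a a' : Fin n → ℕ} (h : ∀ i ∈ S, a i ≤ a' i) :
    GSL m p S a ≤ GSL m p S a' := by
  refine Finset.sum_le_sum fun f _ => ?_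
  by_cases hc : ∀ i ∈ S, cntSL f i ≤ a i
  · rw [if_pos hc, if_pos fun i hi => le_trans (hc i hi) (h i hi)]
  · rw [if_neg hc]
    split_ifs
    · exact Finset.prod_nonneg fun t _ => hp t _
    · exact le_refl 0

private lemma GSL_zero {n : ℕ} (p : Fin 0 → Fin n → ℝ) (S : Finset (Fin n))
    (a : Fin n → ℕ) : GSL 0 p S a = 1 := by
  simp [GSL, cntSL]

private lemma GSL_succ {n m : ℕ} (p : Fin (m + 1) → Fin n → ℝ) (S : Finset (Fin n))
    (a : Fin n → ℕ) :
    GSL (m + 1) p S a = ∑ j : Fin n, p 0 j *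
      (if j ∈ S then
        (if a j = 0 then 0 else
          GSL m (fun t => p t.succ) S (Function.update a j (a j - 1)))
       else GSL m (fun t => p t.succ) S a) := by
  classical
  set e := Fin.consEquiv (fun _ : Fin (m + 1) => Fin n) with he
  rw [GSL, ← Equiv.sum_comp e
    (fun f => if ∀ i ∈ S, cntSL f i ≤ a i then ∏ t, p t (f t) else 0)]
  rw [Fintype.sum_prod_type]
  refine Finset.sum_congr rfl fun j _ => ?_
  have hterm : ∀ f : Fin m → Fin n,
      (if ∀ i ∈ S, cntSL (e (j, f)) i ≤ a i then ∏ t, p t (e (j, f) t) else 0)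
      = (if ∀ i ∈ S, (if j = i then 1 else 0) + cntSL f i ≤ a i then
          p 0 j * ∏ t, p t.succ (f t) else 0) := by
    intro f
    have h1 : (e (j, f) : Fin (m+1) → Fin n) = Fin.cons j f := by rw [he]; rfl
    rw [h1]
    simp only [cntSL_cons, Fin.prod_univ_succ, Fin.cons_zero, Fin.cons_succ]
  rw [Finset.sum_congr rfl fun f _ => hterm f]
  by_cases hjS : j ∈ S
  · rw [if_pos hjS]
    by_cases haj : a j = 0
    · rw [if_pos haj, mul_zero]
      refine Finset.sum_eq_zero fun f _ => ?_
      rw [if_neg]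
      intro hc
      have := hc j hjS
      rw [if_pos rfl, haj] at this
      omega
    · rw [if_neg haj, GSL, Finset.mul_sum]
      refine Finset.sum_congr rfl fun f _ => ?_
      have hcond : (∀ i ∈ S, (if j = i then 1 else 0) + cntSL f i ≤ a i)
          ↔ (∀ i ∈ S, cntSL f i ≤ Function.update a j (a j - 1) i) := by
        refine forall₂_congr fun i hi => ?_
        by_cases hij : j = i
        · subst hij
          rw [if_pos rfl, Function.update_self]
          omega
        · rw [if_neg hij, Function.update_of_ne (fun h => hij h.symm), zero_add]
      rw [if_congr hcond rfl rfl]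
      split_ifs <;> simp
  · rw [if_neg hjS, GSL, Finset.mul_sum]
    refine Finset.sum_congr rfl fun f _ => ?_
    have hcond : (∀ i ∈ S, (if j = i then 1 else 0) + cntSL f i ≤ a i)
        ↔ (∀ i ∈ S, cntSL f i ≤ a i) := by
      refine forall₂_congr fun i hi => ?_
      have hij : j ≠ i := fun h => hjS (h ▸ hi)
      rw [if_neg hij, zero_add]
    rw [if_congr hcond rfl rfl]
    split_ifs <;> simp

private lemma prod_sub_ge_SL {α : Type*} [DecidableEq α] (x c : α → ℝ) (S : Finset α) :
    (∀ i ∈ S, 0 ≤ c i) → (∀ i ∈ S, c i ≤ x i) →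
    ∏ i ∈ S, x i - ∑ j ∈ S, c j * ∏ i ∈ S.erase j, x i ≤ ∏ i ∈ S, (x i - c i) := by
  induction S using Finset.induction_on with
  | empty => simp
  | @insert k S hk ih =>
    intro hc0 hcx
    have hc0' : ∀ i ∈ S, 0 ≤ c i := fun i hi => hc0 i (Finset.mem_insert_of_mem hi)
    have hcx' : ∀ i ∈ S, c i ≤ x i := fun i hi => hcx i (Finset.mem_insert_of_mem hi)
    have hx0 : ∀ i ∈ S, 0 ≤ x i := fun i hi => le_trans (hc0' i hi) (hcx' i hi)
    have hxk : 0 ≤ x k := le_trans (hc0 k (Finset.mem_insert_self k S))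
      (hcx k (Finset.mem_insert_self k S))
    have hQ0 : (0:ℝ) ≤ ∏ i ∈ S, x i := Finset.prod_nonneg hx0
    have hT0 : (0:ℝ) ≤ ∑ j ∈ S, c j * ∏ i ∈ S.erase j, x i := by
      refine Finset.sum_nonneg fun j hj => ?_
      exact mul_nonneg (hc0' j hj)
        (Finset.prod_nonneg fun i hi => hx0 i (Finset.mem_of_mem_erase hi))
    have hP0 : (0:ℝ) ≤ ∏ i ∈ S, (x i - c i) :=
      Finset.prod_nonneg fun i hi => sub_nonneg.2 (hcx' i hi)
    have ihh := ih hc0' hcx'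
    rw [Finset.prod_insert hk, Finset.prod_insert hk, Finset.sum_insert hk,
      Finset.erase_insert hk]
    have hsum : ∑ j ∈ S, c j * ∏ i ∈ (insert k S).erase j, x i
        = x k * ∑ j ∈ S, c j * ∏ i ∈ S.erase j, x i := by
      rw [Finset.mul_sum]
      refine Finset.sum_congr rfl fun j hj => ?_
      have hjk : j ≠ k := fun h => hk (h ▸ hj)
      rw [Finset.erase_insert_of_ne (Ne.symm hjk),
        Finset.prod_insert (fun h => hk (Finset.mem_of_mem_erase h))]
      ring
    rw [hsum]
    set Q := ∏ i ∈ S, x i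
    set T := ∑ j ∈ S, c j * ∏ i ∈ S.erase j, x i
    set P := ∏ i ∈ S, (x i - c i)
    have hck : 0 ≤ c k := hc0 k (Finset.mem_insert_self k S)
    -- goal: x k * Q - (c k * Q + x k * T) ≤ (x k - c k) * P
    by_cases hQT : 0 ≤ Q - T
    · have h1 : (x k - c k) * (Q - T) ≤ (x k - c k) * P :=
        mul_le_mul_of_nonneg_left ihh
          (sub_nonneg.2 (hcx k (Finset.mem_insert_self k S)))
      nlinarith
    · nlinarith [mul_nonneg (sub_nonneg.2 (hcx k (Finset.mem_insert_self k S))) hP0]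

private lemma GSL_key {n : ℕ} : ∀ (m : ℕ) (p : Fin m → Fin n → ℝ),
    (∀ t j, 0 ≤ p t j) → (∀ t, ∑ j, p t j = 1) →
    ∀ (a : Fin n → ℕ) (S : Finset (Fin n)),
    GSL m p S a ≤ ∏ i ∈ S, GSL m p {i} (fun _ => a i) := by
  intro m
  induction m with
  | zero => intro p hp hs a S; simp [GSL_zero]
  | succ m ih =>
    intro p hp hs a S
    classical
    set p' : Fin m → Fin n → ℝ := fun t => p t.succ with hp'def
    have hp' : ∀ t j, 0 ≤ p' t j := fun t j => hp t.succ j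
    have hs' : ∀ t, ∑ j, p' t j = 1 := fun t => hs t.succ
    set x : Fin n → ℝ := fun i => GSL m p' {i} (fun _ => a i) with hxdef
    set y : Fin n → ℝ := fun i =>
      if a i = 0 then 0 else GSL m p' {i} (fun _ => a i - 1) with hydef
    set q : Fin n → ℝ := fun j => p 0 j with hqdef
    have hq0 : ∀ j, 0 ≤ q j := fun j => hp 0 j
    have hq1 : ∀ j, q j ≤ 1 := by
      intro j
      rw [← hs 0]
      exact Finset.single_le_sum (fun i _ => hp 0 i) (Finset.mem_univ j)
    have hx0 : ∀ i, 0 ≤ x i := fun i => GSL_nonneg hp' _ _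
    have hy0 : ∀ i, 0 ≤ y i := by
      intro i; rw [hydef]; dsimp only
      split_ifs
      · exact le_refl 0
      · exact GSL_nonneg hp' _ _
    have hyx : ∀ i, y i ≤ x i := by
      intro i; rw [hydef, hxdef]; dsimp only
      split_ifs
      · exact GSL_nonneg hp' _ _
      · exact GSL_mono hp' fun _ _ => Nat.sub_le _ 1
    -- each RHS factor
    have hfact : ∀ i : Fin n, GSL (m+1) p {i} (fun _ => a i)
        = q i * y i + (1 - q i) * x i := by
      intro i
      rw [GSL_succ]
      have hterm : ∀ j : Fin n, q j *
          (if j ∈ ({i} : Finset (Fin n)) then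
            (if (fun _ => a i) j = 0 then 0 else
              GSL m p' {i} (Function.update (fun _ => a i) j ((fun _ => a i) j - 1)))
           else GSL m p' {i} (fun _ => a i))
          = q j * x i + (if j = i then q j * y i - q j * x i else 0) := by
        intro j
        by_cases hji : j = i
        · subst hji
          rw [if_pos (Finset.mem_singleton_self j), if_pos rfl]
          have hupd : GSL m p' {j} (Function.update (fun _ => a j) j (a j - 1))
              = GSL m p' {j} (fun _ => a j - 1) := by
            refine GSL_congr p' fun i hi => ?_
            rw [Finset.mem_singleton] at hi
            subst hi
            rw [Function.update_self]
          by_cases haj : a j = 0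
          · rw [if_pos haj, hydef]; dsimp only; rw [if_pos haj]; ring
          · rw [if_neg haj, hupd, hydef]; dsimp only; rw [if_neg haj]; ring
        · rw [if_neg (by simpa using hji), if_neg hji, hxdef]; ring
      rw [Finset.sum_congr rfl fun j _ => hterm j, Finset.sum_add_distrib,
        ← Finset.sum_mul, hs 0, Finset.sum_ite_eq' Finset.univ i
          (fun j => q j * y i - q j * x i), if_pos (Finset.mem_univ i)]
      ring
    -- bound LHS
    have hbound : GSL (m+1) p S a ≤
        ∑ j : Fin n, q j * (if j ∈ S then y j * ∏ i ∈ S.erase j, x i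
          else ∏ i ∈ S, x i) := by
      rw [GSL_succ]
      refine Finset.sum_le_sum fun j _ => ?_
      refine mul_le_mul_of_nonneg_left ?_ (hq0 j)
      by_cases hjS : j ∈ S
      · rw [if_pos hjS, if_pos hjS]
        by_cases haj : a j = 0
        · rw [if_pos haj]
          refine mul_nonneg (hy0 j) (Finset.prod_nonneg fun i _ => hx0 i)
        · rw [if_neg haj]
          refine le_trans (ih p' hp' hs' _ S) ?_
          rw [← Finset.mul_prod_erase S _ hjS]
          have h1 : GSL m p' {j} (fun _ => Function.update a j (a j - 1) j) = y j := by
            rw [hydef]; dsimp only; rw [if_neg haj]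
            refine GSL_congr p' fun i hi => ?_
            rw [Finset.mem_singleton] at hi; subst hi; rw [Function.update_self]
          have h2 : ∀ i ∈ S.erase j,
              GSL m p' {i} (fun _ => Function.update a j (a j - 1) i) = x i := by
            intro i hi
            have hij : i ≠ j := Finset.ne_of_mem_erase hi
            rw [hxdef]; dsimp only
            refine GSL_congr p' fun i' hi' => ?_
            rw [Finset.mem_singleton] at hi'; subst hi'
            rw [Function.update_of_ne hij]
          rw [h1, Finset.prod_congr rfl h2]
      · rw [if_neg hjS, if_neg hjS]
        refine le_trans (ih p' hp' hs' a S) (le_of_eq ?_)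
        exact Finset.prod_congr rfl fun i _ => rfl
    refine le_trans hbound ?_
    -- split the sum over S and its complement
    rw [← Finset.sum_filter_add_sum_filter_not Finset.univ (· ∈ S)]
    have hS1 : Finset.univ.filter (· ∈ S) = S := by
      ext i; simp
    have hsplit1 : ∑ j ∈ Finset.univ.filter (· ∈ S), q j *
        (if j ∈ S then y j * ∏ i ∈ S.erase j, x i else ∏ i ∈ S, x i)
        = ∑ j ∈ S, q j * (y j * ∏ i ∈ S.erase j, x i) := by
      rw [hS1]
      exact Finset.sum_congr rfl fun j hj => by rw [if_pos hj]
    have hsplit2 : ∑ j ∈ Finset.univ.filter (¬ · ∈ S), q j *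
        (if j ∈ S then y j * ∏ i ∈ S.erase j, x i else ∏ i ∈ S, x i)
        = (1 - ∑ j ∈ S, q j) * ∏ i ∈ S, x i := by
      have h3 : ∑ j ∈ Finset.univ.filter (¬ · ∈ S), q j = 1 - ∑ j ∈ S, q j := by
        have h4 := Finset.sum_filter_add_sum_filter_not Finset.univ (· ∈ S) q
        rw [hS1] at h4
        have h5 : ∑ j : Fin n, q j = 1 := hs 0
        linarith
      rw [← h3, Finset.sum_mul]
      refine Finset.sum_congr rfl fun j hj => ?_
      rw [Finset.mem_filter] at hj
      rw [if_neg hj.2]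
    rw [hsplit1, hsplit2]
    -- apply the elementary inequality with c i = q i * (x i - y i)
    have hmain := prod_sub_ge_SL x (fun i => q i * (x i - y i)) S
      (fun i _ => mul_nonneg (hq0 i) (sub_nonneg.2 (hyx i)))
      (fun i _ => by show q i * (x i - y i) ≤ x i; nlinarith [mul_nonneg (sub_nonneg.2 (hq1 i)) (hx0 i), mul_nonneg (hq0 i) (hy0 i)])
    have hrw : ∏ i ∈ S, GSL (m+1) p {i} (fun _ => a i)
        = ∏ i ∈ S, (x i - q i * (x i - y i)) := by
      refine Finset.prod_congr rfl fun i _ => ?_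
      rw [hfact i]; ring
    rw [hrw]
    refine le_trans ?_ hmain
    have hsum_eq : ∑ j ∈ S, (q j * (x j - y j)) * ∏ i ∈ S.erase j, x i
        = (∑ j ∈ S, q j) * ∏ i ∈ S, x i - ∑ j ∈ S, q j * (y j * ∏ i ∈ S.erase j, x i) := by
      rw [Finset.sum_mul, ← Finset.sum_sub_distrib]
      refine Finset.sum_congr rfl fun j hj => ?_
      rw [← Finset.mul_prod_erase S x hj]
      ring
    rw [hsum_eq]
    ring_nf
    exact le_refl _

open MeasureTheory ProbabilityTheory Finset

section Meas
variable {Ω : Type*} [MeasurableSpace Ω] (μ : Measure Ω) [IsProbabilityMeasure μ]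
  (n : ℕ) (J : Fin n → Ω → Fin n)

private lemma expand_SL (hmeas : ∀ t, Measurable (J t))
    (hindep : iIndepFun J μ)
    (Φ : (Fin n → Fin n) → Prop) [DecidablePred Φ] :
    μ {ω | Φ (fun t => J t ω)} =
      ∑ f ∈ Finset.univ.filter Φ, ∏ t, μ (J t ⁻¹' {f t}) := by
  classical
  have hset : {ω | Φ (fun t => J t ω)}
      = ⋃ f ∈ Finset.univ.filter Φ, ⋂ t, J t ⁻¹' {f t} := by
    ext ω
    simp only [Set.mem_setOf_eq, Set.mem_iUnion, Finset.mem_filter, Finset.mem_univ,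
      true_and, Set.mem_iInter, Set.mem_preimage, Set.mem_singleton_iff]
    constructor
    · intro h
      exact ⟨fun t => J t ω, h, fun t => rfl⟩
    · rintro ⟨f, hf, hfe⟩
      have : (fun t => J t ω) = f := funext hfe
      rw [this]; exact hf
  have hd : Set.PairwiseDisjoint (↑(Finset.univ.filter Φ))
      (fun f : Fin n → Fin n => ⋂ t, J t ⁻¹' {f t}) := by
    intro f _ g _ hfg
    rw [Function.onFun, Set.disjoint_left]
    intro ω hf hg
    simp only [Set.mem_iInter, Set.mem_preimage, Set.mem_singleton_iff] at hf hg
    exact hfg (funext fun t => (hf t).symm.trans (hg t))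
  have hm : ∀ f ∈ Finset.univ.filter Φ,
      MeasurableSet (⋂ t, J t ⁻¹' {f t}) :=
    fun f _ => MeasurableSet.iInter fun t => hmeas t (measurableSet_singleton _)
  rw [hset, measure_biUnion_finset hd hm]
  refine Finset.sum_congr rfl fun f _ => ?_
  have h := hindep.measure_inter_preimage_eq_mul Finset.univ
    (sets := fun t => {f t}) (fun i _ => measurableSet_singleton _)
  rw [← h]
  congr 1
  simp

private lemma rowsum_SL (hmeas : ∀ t, Measurable (J t)) (t : Fin n) :
    ∑ j, μ (J t ⁻¹' {j}) = 1 := by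
  classical
  have : (⋃ j : Fin n, J t ⁻¹' {j}) = Set.univ := by
    ext ω; simp
  have hd : Pairwise (Function.onFun Disjoint fun j : Fin n => J t ⁻¹' {j}) := by
    intro i j hij
    rw [Function.onFun, Set.disjoint_left]
    intro ω hi hj
    simp only [Set.mem_preimage, Set.mem_singleton_iff] at hi hj
    exact hij (hi.symm.trans hj)
  have h := measure_iUnion (μ := μ) hd (fun j => hmeas t (measurableSet_singleton _))
  rw [this, measure_univ, tsum_fintype] at h
  exact h.symm

end Meas

private lemma GSL_eq_filter {n m : ℕ} (p : Fin m → Fin n → ℝ) (S : Finset (Fin n))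
    (a : Fin n → ℕ) :
    GSL m p S a = ∑ f ∈ Finset.univ.filter
      (fun f : Fin m → Fin n => ∀ i ∈ S, cntSL f i ≤ a i), ∏ t, p t (f t) := by
  rw [GSL, Finset.sum_filter]

/-- Lemma 6.3 of the paper (negative correlation of small-load events): if balls
`J 0, …, J (n-1)` are placed independently into `n` bins (ball `t` with an arbitrary
distribution), and `A i` is the event that bin `i` receives at most `a` balls, then for
every subset `S` of bins, `P(∩_{i∈S} A i) ≤ ∏_{i∈S} P(A i)`. -/
theorem small_load_negatively_correlated
    {Ω : Type*} [MeasurableSpace Ω] (μ : Measure Ω) [IsProbabilityMeasure μ]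
    (n : ℕ) (J : Fin n → Ω → Fin n)
    (hmeas : ∀ t, Measurable (J t))
    (hindep : iIndepFun J μ)
    (a : ℕ) (S : Finset (Fin n)) :
    μ {ω | ∀ i ∈ S, (Finset.univ.filter fun t => J t ω = i).card ≤ a}
      ≤ ∏ i ∈ S, μ {ω | (Finset.univ.filter fun t => J t ω = i).card ≤ a} := by
  classical
  set p : Fin n → Fin n → ℝ := fun t j => (μ (J t ⁻¹' {j})).toReal with hpdef
  have hp : ∀ t j, 0 ≤ p t j := fun t j => ENNReal.toReal_nonneg
  have hs : ∀ t, ∑ j, p t j = 1 := by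
    intro t
    rw [hpdef]
    dsimp only
    rw [← ENNReal.toReal_sum (fun j _ => measure_ne_top μ _), rowsum_SL μ n J hmeas t,
      ENNReal.toReal_one]
  have hprodne : ∀ f : Fin n → Fin n, (∏ t, μ (J t ⁻¹' {f t})) ≠ ⊤ :=
    fun f => (ENNReal.prod_lt_top fun t _ => measure_lt_top μ _).ne
  -- expansions
  have hES : {ω | ∀ i ∈ S, (Finset.univ.filter fun t => J t ω = i).card ≤ a}
      = {ω | (fun f : Fin n → Fin n => ∀ i ∈ S, cntSL f i ≤ a) (fun t => J t ω)} := by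
    ext ω; simp [cntSL]
  have hEi : ∀ i : Fin n, {ω | (Finset.univ.filter fun t => J t ω = i).card ≤ a}
      = {ω | (fun f : Fin n → Fin n => ∀ i' ∈ ({i} : Finset (Fin n)), cntSL f i' ≤ a)
          (fun t => J t ω)} := by
    intro i; ext ω; simp [cntSL]
  have hL : μ {ω | ∀ i ∈ S, (Finset.univ.filter fun t => J t ω = i).card ≤ a} ≠ ⊤ :=
    measure_ne_top μ _
  have hR : (∏ i ∈ S, μ {ω | (Finset.univ.filter fun t => J t ω = i).card ≤ a}) ≠ ⊤ :=
    (ENNReal.prod_lt_top fun i _ => measure_lt_top μ _).ne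
  rw [← ENNReal.toReal_le_toReal hL hR, ENNReal.toReal_prod]
  have h1 : (μ {ω | ∀ i ∈ S, (Finset.univ.filter fun t => J t ω = i).card ≤ a}).toReal
      = GSL n p S (fun _ => a) := by
    rw [hES, expand_SL μ n J hmeas hindep (fun f : Fin n → Fin n => ∀ i ∈ S, cntSL f i ≤ a),
      ENNReal.toReal_sum (fun f _ => hprodne f), GSL_eq_filter]
    exact Finset.sum_congr rfl fun f _ => ENNReal.toReal_prod _ _
  have h2 : ∀ i : Fin n, (μ {ω | (Finset.univ.filter fun t => J t ω = i).card ≤ a}).toReal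
      = GSL n p {i} (fun _ => a) := by
    intro i
    rw [hEi i, expand_SL μ n J hmeas hindep
        (fun f : Fin n → Fin n => ∀ i' ∈ ({i} : Finset (Fin n)), cntSL f i' ≤ a),
      ENNReal.toReal_sum (fun f _ => hprodne f), GSL_eq_filter]
    exact Finset.sum_congr rfl fun f _ => ENNReal.toReal_prod _ _
  rw [h1, Finset.prod_congr rfl fun i _ => h2 i]
  exact GSL_key n p hp hs (fun _ => a) S
end

section
/- Consider n bins ordered cyclically and n rounds, where in round t each of the n bins is independently included in the offered set C_t with probability 1/2, the sets C_1, …, C_n being independent. Place ball t in the first bin of C_t encountered when traversing the bins cyclically starting from bin t+1 (if C_t is empty the round fails). Then with probability tending to 1 as n → ∞, every round succeeds and the maximal load over all bins is at most 3·√(log n). -/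
open MeasureTheory Finset
open scoped ENNReal

/-- The bin in which ball `t` is placed by the cyclic first-fit strategy: among the bins
offered in round `t` (bin `b` is offered iff `ω t b = true`), take the first bin
encountered when traversing the bins cyclically starting from bin `t + 1`. (If no bin is
offered, i.e. the round fails, we return `t` as a junk value.) -/
def cyclicPlace (n : ℕ) [NeZero n] (ω : Fin n → Fin n → Bool) (t : Fin n) : Fin n :=
  if h : (Finset.univ.filter fun j : Fin n => ω t (t + 1 + j) = true).Nonempty then
    t + 1 + (Finset.univ.filter fun j : Fin n => ω t (t + 1 + j) = true).min' h
  else t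


lemma aux_pi_cylinder {ι : Type*} [Fintype ι] [DecidableEq ι] {α : ι → Type*}
    [∀ i, MeasurableSpace (α i)]
    (μ : ∀ i, Measure (α i)) [∀ i, IsProbabilityMeasure (μ i)] (T : Finset ι)
    (A : ∀ i, Set (α i)) :
    Measure.pi μ {ω : ∀ i, α i | ∀ t ∈ T, ω t ∈ A t} = ∏ t ∈ T, μ t (A t) := by
  have hset : {ω : ∀ i, α i | ∀ t ∈ T, ω t ∈ A t}
      = Set.univ.pi (fun t => if t ∈ T then A t else Set.univ) := by
    ext ω
    simp only [Set.mem_setOf_eq, Set.mem_pi, Set.mem_univ, forall_true_left]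
    constructor
    · intro h t
      by_cases ht : t ∈ T
      · simpa [ht] using h t ht
      · simp [ht]
    · intro h t ht
      have := h t
      rwa [if_pos ht] at this
  rw [hset, Measure.pi_pi]
  calc ∏ i, μ i (if i ∈ T then A i else Set.univ)
      = ∏ i, (if i ∈ T then μ i (A i) else 1) := by
        refine Finset.prod_congr rfl fun i _ => ?_
        split <;> simp
    _ = ∏ t ∈ T, μ t (A t) := by rw [Finset.prod_ite_mem, Finset.univ_inter]

lemma aux_gsum (N : ℕ) : ∀ (d a k : ℕ), N - a ≤ d →
    ∑ J ∈ (Finset.Ico a N).powersetCard k, ∏ j ∈ J, ((2:ℝ≥0∞)⁻¹) ^ (j+1)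
      ≤ 2^k * ((2:ℝ≥0∞)⁻¹) ^ (k*a + ∑ i ∈ Finset.range k, (i+1)) := by
  have h2q : (2:ℝ≥0∞) * 2⁻¹ = 1 := ENNReal.mul_inv_cancel two_ne_zero (by norm_num)
  intro d
  induction d with
  | zero =>
    intro a k h
    rw [Finset.Ico_eq_empty (by omega)]
    cases k with
    | zero => simp
    | succ k =>
      rw [Finset.powersetCard_eq_empty.mpr (by simp)]
      simp
  | succ d ih =>
    intro a k h
    by_cases haN : a < N
    · have hins : insert a (Finset.Ico (a+1) N) = Finset.Ico a N :=
        Finset.insert_Ico_add_one_left_eq_Ico haN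
      have hnotmem : a ∉ Finset.Ico (a+1) N := by simp
      cases k with
      | zero => simp
      | succ k =>
        rw [← hins, Finset.powersetCard_succ_insert hnotmem]
        have hdisj : Disjoint ((Finset.Ico (a+1) N).powersetCard (k+1))
            (Finset.image (insert a) ((Finset.Ico (a+1) N).powersetCard k)) := by
          rw [Finset.disjoint_left]
          intro J hJ hJ'
          have hJs := (Finset.mem_powersetCard.mp hJ).1
          have haJ : a ∉ J := fun hmem => hnotmem (hJs hmem)
          obtain ⟨K, _, rfl⟩ := Finset.mem_image.mp hJ'
          exact haJ (Finset.mem_insert_self a K)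
        rw [Finset.sum_union hdisj]
        have himg : ∑ J ∈ Finset.image (insert a) ((Finset.Ico (a+1) N).powersetCard k),
            ∏ j ∈ J, ((2:ℝ≥0∞)⁻¹) ^ (j+1)
            = ∑ K ∈ (Finset.Ico (a+1) N).powersetCard k,
                ((2:ℝ≥0∞)⁻¹) ^ (a+1) * ∏ j ∈ K, ((2:ℝ≥0∞)⁻¹) ^ (j+1) := by
          rw [Finset.sum_image]
          · refine Finset.sum_congr rfl fun K hK => ?_
            have haK : a ∉ K := fun hmem =>
              hnotmem ((Finset.mem_powersetCard.mp hK).1 hmem)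
            rw [Finset.prod_insert haK]
          · intro K hK K' hK' hEq
            have haK : a ∉ K := fun hmem =>
              hnotmem ((Finset.mem_powersetCard.mp hK).1 hmem)
            have haK' : a ∉ K' := fun hmem =>
              hnotmem ((Finset.mem_powersetCard.mp hK').1 hmem)
            have := congrArg (fun s => Finset.erase s a) hEq
            simpa [Finset.erase_insert haK, Finset.erase_insert haK'] using this
        rw [himg, ← Finset.mul_sum]
        have h1 := ih (a+1) (k+1) (by omega)
        have h2 := ih (a+1) k (by omega)
        set q : ℝ≥0∞ := (2:ℝ≥0∞)⁻¹ with hq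
        set e : ℕ := ∑ i ∈ Finset.range k, (i+1) with he
        have hesucc : ∑ i ∈ Finset.range (k+1), (i+1) = e + (k+1) := by
          rw [Finset.sum_range_succ]
        set E : ℕ := (k+1)*a + (e + (k+1)) with hE
        have hpow1 : (2:ℝ≥0∞)^(k+1) * q^(k+1) = 1 := by
          rw [← mul_pow, h2q, one_pow]
        calc ∑ J ∈ (Finset.Ico (a+1) N).powersetCard (k+1), ∏ j ∈ J, q ^ (j+1)
              + q^(a+1) * ∑ K ∈ (Finset.Ico (a+1) N).powersetCard k, ∏ j ∈ K, q ^ (j+1)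
            ≤ 2^(k+1) * q^((k+1)*(a+1) + (e + (k+1)))
              + q^(a+1) * (2^k * q^(k*(a+1) + e)) := by
              refine add_le_add ?_ ?_
              · simpa [hesucc] using h1
              · exact mul_le_mul_right h2 _
          _ = (1 + 2^k) * q^E := by
              have e1 : (k+1)*(a+1) + (e + (k+1)) = E + (k+1) := by rw [hE]; ring
              have e2 : E = (a+1) + (k*(a+1) + e) := by rw [hE]; ring
              rw [e1, pow_add q E (k+1), show (2:ℝ≥0∞)^(k+1) * (q^E * q^(k+1))
                    = ((2:ℝ≥0∞)^(k+1) * q^(k+1)) * q^E by ring, hpow1, one_mul,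
                  e2, pow_add q (a+1) (k*(a+1)+e)]
              ring
          _ ≤ 2^(k+1) * q^E := by
              refine mul_le_mul_left ?_ _
              rw [pow_succ, mul_two]
              refine add_le_add ?_ le_rfl
              calc (1:ℝ≥0∞) = 1^k := (one_pow k).symm
                _ ≤ 2^k := pow_le_pow_left₀ (by norm_num) (by norm_num) k
          _ = 2^(k+1) * q^((k+1)*a + ∑ i ∈ Finset.range (k+1), (i+1)) := by
              rw [hesucc]
    · rw [Finset.Ico_eq_empty (by omega)]
      cases k with
      | zero => simp
      | succ k =>
        rw [Finset.powersetCard_eq_empty.mpr (by simp)]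
        simp

lemma aux_sq_le_two_pow : ∀ n : ℕ, 4 ≤ n → n * n ≤ 2 ^ n := by
  intro n
  induction n with
  | zero => omega
  | succ m ih =>
    intro h
    rcases Nat.lt_or_ge m 4 with hm | hm
    · have : m = 3 := by omega
      subst this; norm_num
    · have h1 := ih hm
      have h2 : 2*m+1 ≤ m*m := by nlinarith
      calc (m+1)*(m+1) = m*m + (2*m+1) := by ring
        _ ≤ 2^m + 2^m := by omega
        _ = 2^(m+1) := by ring



def auxA (n : ℕ) [NeZero n] (c i b : Fin n) : Set Bool :=
  if b - c = i - c then {true} else if b - c < i - c then {false} else Set.univ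

def auxE (n : ℕ) [NeZero n] (c i : Fin n) : Set (Fin n → Bool) :=
  {f | ∀ b ∈ Finset.univ, f b ∈ auxA n c i b}

lemma aux_nuB (b : Bool) : (PMF.uniformOfFintype Bool).toMeasure {b} = 2⁻¹ := by
  rw [PMF.toMeasure_apply_singleton _ _ (measurableSet_singleton b)]
  simp [PMF.uniformOfFintype_apply]

lemma aux_rowE (n : ℕ) [NeZero n] (c i : Fin n) :
    (Measure.pi fun _ : Fin n => (PMF.uniformOfFintype Bool).toMeasure) (auxE n c i)
      = (2:ℝ≥0∞)⁻¹ ^ (((i - c : Fin n) : ℕ) + 1) := by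
  rw [auxE, aux_pi_cylinder]
  have h1 : ∀ b : Fin n, (PMF.uniformOfFintype Bool).toMeasure (auxA n c i b)
      = (PMF.uniformOfFintype Bool).toMeasure (auxA n c i b) := fun _ => rfl
  calc ∏ b ∈ Finset.univ, (PMF.uniformOfFintype Bool).toMeasure (auxA n c i b)
      = ∏ j' : Fin n, (PMF.uniformOfFintype Bool).toMeasure (auxA n c i (c + j')) :=
        (Equiv.prod_comp (Equiv.addLeft c)
          (fun b => (PMF.uniformOfFintype Bool).toMeasure (auxA n c i b))).symm
    _ = ∏ j' : Fin n, (if j' ∈ Finset.Iic (i - c) then (2:ℝ≥0∞)⁻¹ else 1) := by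
        refine Finset.prod_congr rfl fun j' _ => ?_
        have hsub : (c + j') - c = j' := by abel
        rcases lt_trichotomy j' (i - c) with hlt | heq | hgt
        · rw [auxA, hsub, if_neg (ne_of_lt hlt), if_pos hlt, aux_nuB,
            if_pos (Finset.mem_Iic.mpr hlt.le)]
        · rw [auxA, hsub, if_pos heq, aux_nuB, if_pos (Finset.mem_Iic.mpr heq.le)]
        · rw [auxA, hsub, if_neg (ne_of_gt hgt), if_neg (not_lt.mpr hgt.le),
            if_neg (by simpa using not_le.mpr hgt), measure_univ]
    _ = (2:ℝ≥0∞)⁻¹ ^ (((i - c : Fin n) : ℕ) + 1) := by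
        rw [Finset.prod_ite_mem, Finset.univ_inter, Finset.prod_const, Fin.card_Iic]

lemma aux_fail (n : ℕ) [NeZero n] :
    (Measure.pi fun _ : Fin n => (PMF.uniformOfFintype Bool).toMeasure)
      {f : Fin n → Bool | ∀ b, f b = false} = (2:ℝ≥0∞)⁻¹ ^ n := by
  have hset : {f : Fin n → Bool | ∀ b, f b = false}
      = {f : Fin n → Bool | ∀ b ∈ Finset.univ, f b ∈ ({false} : Set Bool)} := by
    ext f; simp
  rw [hset, aux_pi_cylinder]
  simp [aux_nuB, Finset.prod_const]

lemma aux_subset (n : ℕ) [NeZero n] (k : ℕ)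
    (hk : k = ⌊3 * Real.sqrt (Real.log n)⌋₊ + 1) :
    {ω : Fin n → Fin n → Bool | (∀ t : Fin n, ∃ j : Fin n, ω t (t + 1 + j) = true) ∧
        ∀ i : Fin n, ((Finset.univ.filter fun t => cyclicPlace n ω t = i).card : ℝ)
          ≤ 3 * Real.sqrt (Real.log n)}ᶜ
      ⊆ (⋃ t : Fin n, {ω : Fin n → Fin n → Bool | ∀ b, ω t b = false})
        ∪ ⋃ i : Fin n, ⋃ T ∈ (Finset.univ : Finset (Fin n)).powersetCard k,
            {ω : Fin n → Fin n → Bool | ∀ t ∈ T, ω t ∈ auxE n (t+1) i} := by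
  intro ω hω
  simp only [Set.mem_compl_iff, Set.mem_setOf_eq, not_and_or] at hω
  by_cases hA : ∀ t : Fin n, ∃ j : Fin n, ω t (t + 1 + j) = true
  · have hB : ∃ i : Fin n, 3 * Real.sqrt (Real.log n)
        < ((Finset.univ.filter fun t => cyclicPlace n ω t = i).card : ℝ) := by
      rcases hω with h | h
      · exact absurd hA h
      · push_neg at h; exact h
    obtain ⟨i, hi⟩ := hB
    right
    have hkcard : k ≤ (Finset.univ.filter fun t => cyclicPlace n ω t = i).card := by
      have h0 : (0:ℝ) ≤ 3 * Real.sqrt (Real.log n) := by positivity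
      have := (Nat.floor_lt h0).mpr hi
      omega
    obtain ⟨T, hTsub, hTcard⟩ := Finset.exists_subset_card_eq hkcard
    refine Set.mem_iUnion.mpr ⟨i, Set.mem_iUnion₂.mpr ⟨T,
      Finset.mem_powersetCard.mpr ⟨Finset.subset_univ T, hTcard⟩, ?_⟩⟩
    intro t ht b _
    have htfilt := Finset.mem_filter.mp (hTsub ht)
    have hplace := htfilt.2
    obtain ⟨j0, hj0⟩ := hA t
    have hne : (Finset.univ.filter fun j : Fin n => ω t (t + 1 + j) = true).Nonempty :=
      ⟨j0, Finset.mem_filter.mpr ⟨Finset.mem_univ _, hj0⟩⟩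
    rw [cyclicPlace, dif_pos hne] at hplace
    have hmin : (Finset.univ.filter fun j : Fin n => ω t (t + 1 + j) = true).min' hne
        = i - (t+1) := by
      rw [eq_sub_iff_add_eq, add_comm]
      exact hplace
    by_cases h1 : b - (t+1) = i - (t+1)
    · have hb : b = (t+1) + (i - (t+1)) := by rw [← h1]; abel
      have hmem := Finset.mem_filter.mp
        ((Finset.univ.filter fun j : Fin n => ω t (t + 1 + j) = true).min'_mem hne)
      rw [hmin] at hmem
      rw [auxA, if_pos h1, hb]
      exact hmem.2
    · by_cases h2 : b - (t+1) < i - (t+1)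
      · rw [auxA, if_neg h1, if_pos h2]
        have hb : b = (t+1) + (b - (t+1)) := by abel
        by_contra hcon
        simp only [Set.mem_singleton_iff] at hcon
        have hval : ω t b = true := by simpa using hcon
        have htrue : ω t (t + 1 + (b - (t+1))) = true := by rw [← hb]; exact hval
        have hmemF : b - (t+1) ∈ Finset.univ.filter fun j : Fin n => ω t (t + 1 + j) = true :=
          Finset.mem_filter.mpr ⟨Finset.mem_univ _, htrue⟩
        have := Finset.min'_le _ _ hmemF
        rw [hmin] at this
        exact absurd h2 (not_lt.mpr this)
      · rw [auxA, if_neg h1, if_neg h2]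
        trivial
  · left
    push_neg at hA
    obtain ⟨t, ht⟩ := hA
    refine Set.mem_iUnion.mpr ⟨t, fun b => ?_⟩
    have := ht (b - (t+1))
    rw [show (t + 1 + (b - (t+1)) : Fin n) = b by abel] at this
    exact Bool.not_eq_true _ |>.mp this


lemma aux_sum_bound (n : ℕ) [NeZero n] (k : ℕ) (i : Fin n) :
    ∑ T ∈ (Finset.univ : Finset (Fin n)).powersetCard k,
        ∏ t ∈ T, (2:ℝ≥0∞)⁻¹ ^ (((i - (t+1) : Fin n) : ℕ) + 1)
      ≤ 2^k * (2:ℝ≥0∞)⁻¹ ^ (∑ i ∈ Finset.range k, (i+1)) := by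
  set f : Fin n → ℕ := fun t => ((i - (t+1) : Fin n) : ℕ) with hf
  have hfinj : Function.Injective f := by
    intro t t' h
    have h2 : (i - (t+1) : Fin n) = i - (t'+1) := Fin.val_injective h
    have h3 : (t + 1 : Fin n) = t' + 1 := sub_right_injective h2
    exact add_right_cancel h3
  calc ∑ T ∈ (Finset.univ : Finset (Fin n)).powersetCard k, ∏ t ∈ T, (2:ℝ≥0∞)⁻¹ ^ (f t + 1)
      = ∑ T ∈ (Finset.univ : Finset (Fin n)).powersetCard k,
          ∏ m ∈ T.image f, (2:ℝ≥0∞)⁻¹ ^ (m + 1) := by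
        refine Finset.sum_congr rfl fun T _ => ?_
        rw [Finset.prod_image (fun a _ b _ h => hfinj h)]
    _ = ∑ M ∈ ((Finset.univ : Finset (Fin n)).powersetCard k).image (Finset.image f),
          ∏ m ∈ M, (2:ℝ≥0∞)⁻¹ ^ (m + 1) := by
        rw [Finset.sum_image (fun T _ T' _ h => Finset.image_injective hfinj h)]
    _ ≤ ∑ M ∈ (Finset.range n).powersetCard k, ∏ m ∈ M, (2:ℝ≥0∞)⁻¹ ^ (m + 1) := by
        refine Finset.sum_le_sum_of_subset fun M hM => ?_
        obtain ⟨T, hT, rfl⟩ := Finset.mem_image.mp hM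
        refine Finset.mem_powersetCard.mpr ⟨?_, ?_⟩
        · intro m hm
          obtain ⟨t, _, rfl⟩ := Finset.mem_image.mp hm
          exact Finset.mem_range.mpr (Fin.is_lt _)
        · rw [Finset.card_image_of_injective T hfinj]
          exact (Finset.mem_powersetCard.mp hT).2
    _ ≤ 2^k * (2:ℝ≥0∞)⁻¹ ^ (∑ i ∈ Finset.range k, (i+1)) := by
        have := aux_gsum n n 0 k (by omega)
        rw [Finset.range_eq_Ico]
        simpa using this


lemma aux_real (ε : ℝ) (hε : 0 < ε) (n : ℕ) (hn4 : 4 ≤ n) (hnε : 4/ε ≤ (n:ℝ))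
    (k : ℕ) (hk : k = ⌊3 * Real.sqrt (Real.log n)⌋₊ + 1) :
    (n:ℝ) * (2⁻¹:ℝ)^n + (n:ℝ) * ((2:ℝ)^k * (2⁻¹:ℝ)^(∑ i ∈ Finset.range k, (i+1))) ≤ ε := by
  have hn0 : (0:ℝ) < n := by positivity
  have hL1 : 1 ≤ Real.log n := by
    have hexp : Real.exp 1 ≤ (n:ℝ) := by
      have h1 : Real.exp 1 ≤ 3 := le_of_lt (lt_trans Real.exp_one_lt_d9 (by norm_num))
      have h2 : (3:ℝ) ≤ n := by exact_mod_cast (by omega : 3 ≤ n)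
      linarith
    calc (1:ℝ) = Real.log (Real.exp 1) := (Real.log_exp 1).symm
      _ ≤ Real.log n := Real.log_le_log (Real.exp_pos 1) hexp
  set L := Real.log n with hL
  set s := Real.sqrt L with hs
  have hs1 : 1 ≤ s := by
    calc (1:ℝ) = Real.sqrt 1 := Real.sqrt_one.symm
      _ ≤ s := Real.sqrt_le_sqrt hL1
  have hs0 : 0 ≤ s := by linarith
  have hssq : s * s = L := Real.mul_self_sqrt (by linarith)
  have hk1 : (1:ℕ) ≤ k := by omega
  have hxk : 3 * s ≤ (k:ℝ) := by
    have := Nat.lt_floor_add_one (3 * s)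
    rw [hk]
    push_cast
    linarith
  -- m = sum of i over range k
  set m : ℕ := ∑ i ∈ Finset.range k, i with hm
  have hek : ∑ i ∈ Finset.range k, (i+1) = m + k := by
    rw [Finset.sum_add_distrib, Finset.sum_const, Finset.card_range, smul_eq_mul, mul_one]
  have hms : (m:ℝ) * 2 = (k:ℝ) * ((k:ℝ) - 1) := by
    have h : (m * 2 : ℕ) = (k * (k-1) : ℕ) := Finset.sum_range_id_mul_two k
    have hcast := congrArg (Nat.cast : ℕ → ℝ) h
    push_cast [Nat.cast_sub hk1] at hcast
    exact hcast
  have hm3 : 3 * L ≤ (m:ℝ) := by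
    have hprod : (3*s) * (3*s - 1) ≤ (k:ℝ) * ((k:ℝ) - 1) := by
      refine mul_le_mul hxk (by linarith) (by linarith) (by linarith)
    nlinarith [mul_le_mul_of_nonneg_left hs1 hs0]
  -- 2^k * (1/2)^(m+k) = (1/2)^m
  have hcollapse : (2:ℝ)^k * (2⁻¹:ℝ)^(m + k) = (2⁻¹:ℝ)^m := by
    rw [pow_add]
    have : (2:ℝ)^k * (2⁻¹:ℝ)^k = 1 := by
      rw [← mul_pow]; norm_num
    calc (2:ℝ)^k * ((2⁻¹:ℝ)^m * (2⁻¹:ℝ)^k)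
        = ((2:ℝ)^k * (2⁻¹:ℝ)^k) * (2⁻¹:ℝ)^m := by ring
      _ = (2⁻¹:ℝ)^m := by rw [this, one_mul]
  -- n^2 ≤ 2^m
  have hn2m : (n:ℝ) * (n:ℝ) ≤ 2^m := by
    have h2m : (2:ℝ)^m = Real.exp (m * Real.log 2) := by
      rw [← Real.log_pow, Real.exp_log (by positivity)]
    have hnn : (n:ℝ) * (n:ℝ) = Real.exp (L + L) := by
      rw [Real.exp_add, hL, Real.exp_log hn0]
    rw [hnn, h2m]
    apply Real.exp_le_exp.mpr
    have hlog2 : (0.6931471803:ℝ) ≤ Real.log 2 := le_of_lt Real.log_two_gt_d9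
    nlinarith
  -- first term
  have hA1 : (n:ℝ) * (2⁻¹:ℝ)^n ≤ 1/(n:ℝ) := by
    have h2n : (n:ℝ) * (n:ℝ) ≤ 2^n := by
      have := aux_sq_le_two_pow n hn4
      exact_mod_cast this
    have heq : (n:ℝ) * (2⁻¹:ℝ)^n = n / 2^n := by
      rw [inv_pow]; ring
    rw [heq, div_le_div_iff₀ (by positivity) hn0]
    nlinarith
  have hA2 : (n:ℝ) * ((2:ℝ)^k * (2⁻¹:ℝ)^(∑ i ∈ Finset.range k, (i+1))) ≤ 1/(n:ℝ) := by
    rw [hek, hcollapse]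
    have heq : (n:ℝ) * (2⁻¹:ℝ)^m = n / 2^m := by
      rw [inv_pow]; ring
    rw [heq, div_le_div_iff₀ (by positivity) hn0]
    nlinarith
  have hfin : 2/(n:ℝ) ≤ ε := by
    rw [div_le_iff₀ hn0]
    have h4 : (4:ℝ) ≤ ε * n := by
      have := mul_le_mul_of_nonneg_left hnε hε.le
      rw [mul_div_cancel₀ _ (ne_of_gt hε)] at this
      linarith
    linarith
  have : 1/(n:ℝ) + 1/(n:ℝ) = 2/(n:ℝ) := by ring
  linarith

/-- Lemma 6.2 of the paper: in the model where in each of `n` rounds every one of the `n`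
cyclically ordered bins is offered independently with probability `1/2` (rounds being
independent), the cyclic first-fit strategy succeeds in every round and achieves maximal
load at most `3 √(log n)`, with probability tending to `1` as `n → ∞`. -/
theorem cyclic_first_fit_load (ε : ℝ) (hε : 0 < ε) :
    ∃ n₀ : ℕ, ∀ n : ℕ, n₀ ≤ n → ∀ [NeZero n],
      1 - ε ≤ ((Measure.pi fun _ : Fin n => Measure.pi fun _ : Fin n =>
            (PMF.uniformOfFintype Bool).toMeasure)
          {ω | (∀ t : Fin n, ∃ j : Fin n, ω t (t + 1 + j) = true) ∧
            ∀ i : Fin n, ((Finset.univ.filter fun t => cyclicPlace n ω t = i).card : ℝ)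
              ≤ 3 * Real.sqrt (Real.log n)}).toReal := by
  refine ⟨max 4 ⌈4/ε⌉₊, ?_⟩
  intro n hn _inst
  have hn4 : 4 ≤ n := le_trans (le_max_left _ _) hn
  have hnε : 4/ε ≤ (n:ℝ) := by
    refine le_trans (Nat.le_ceil _) ?_
    exact_mod_cast le_trans (le_max_right _ _) hn
  set μ : Measure (Fin n → Fin n → Bool) :=
    (Measure.pi fun _ : Fin n => Measure.pi fun _ : Fin n =>
      (PMF.uniformOfFintype Bool).toMeasure) with hμ
  set S : Set (Fin n → Fin n → Bool) :=
    {ω | (∀ t : Fin n, ∃ j : Fin n, ω t (t + 1 + j) = true) ∧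
      ∀ i : Fin n, ((Finset.univ.filter fun t => cyclicPlace n ω t = i).card : ℝ)
        ≤ 3 * Real.sqrt (Real.log n)} with hS
  set k : ℕ := ⌊3 * Real.sqrt (Real.log n)⌋₊ + 1 with hk
  set ek : ℕ := ∑ i ∈ Finset.range k, (i+1) with hek
  -- bound on Bad1
  have hBad1 : μ (⋃ t : Fin n, {ω : Fin n → Fin n → Bool | ∀ b, ω t b = false})
      ≤ (n : ℝ≥0∞) * (2:ℝ≥0∞)⁻¹ ^ n := by
    refine le_trans (measure_iUnion_le _) ?_
    have heach : ∀ t : Fin n,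
        μ {ω : Fin n → Fin n → Bool | ∀ b, ω t b = false} = (2:ℝ≥0∞)⁻¹ ^ n := by
      intro t
      have hset : {ω : Fin n → Fin n → Bool | ∀ b, ω t b = false}
          = {ω : Fin n → Fin n → Bool | ∀ t' ∈ ({t} : Finset (Fin n)),
              ω t' ∈ {f : Fin n → Bool | ∀ b, f b = false}} := by
        ext ω; simp
      rw [hμ, hset, aux_pi_cylinder, Finset.prod_singleton, aux_fail]
    rw [tsum_fintype]
    simp only [heach]
    rw [Finset.sum_const, Finset.card_univ, Fintype.card_fin, nsmul_eq_mul]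
  -- bound on Bad2
  have hBad2 : μ (⋃ i : Fin n, ⋃ T ∈ (Finset.univ : Finset (Fin n)).powersetCard k,
        {ω : Fin n → Fin n → Bool | ∀ t ∈ T, ω t ∈ auxE n (t+1) i})
      ≤ (n : ℝ≥0∞) * (2^k * (2:ℝ≥0∞)⁻¹ ^ ek) := by
    refine le_trans (measure_iUnion_le _) ?_
    have heach : ∀ i : Fin n,
        μ (⋃ T ∈ (Finset.univ : Finset (Fin n)).powersetCard k,
          {ω : Fin n → Fin n → Bool | ∀ t ∈ T, ω t ∈ auxE n (t+1) i})
        ≤ 2^k * (2:ℝ≥0∞)⁻¹ ^ ek := by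
      intro i
      refine le_trans (measure_biUnion_finset_le _ _) ?_
      have hcyl : ∀ T ∈ (Finset.univ : Finset (Fin n)).powersetCard k,
          μ {ω : Fin n → Fin n → Bool | ∀ t ∈ T, ω t ∈ auxE n (t+1) i}
          = ∏ t ∈ T, (2:ℝ≥0∞)⁻¹ ^ (((i - (t+1) : Fin n) : ℕ) + 1) := by
        intro T _
        rw [hμ, aux_pi_cylinder]
        exact Finset.prod_congr rfl fun t _ => aux_rowE n (t+1) i
      rw [Finset.sum_congr rfl hcyl]
      exact aux_sum_bound n k i
    refine le_trans (ENNReal.tsum_le_tsum heach) ?_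
    rw [tsum_fintype, Finset.sum_const, Finset.card_univ, Fintype.card_fin, nsmul_eq_mul]
  -- total bound
  have htotal : μ Sᶜ ≤ (n : ℝ≥0∞) * (2:ℝ≥0∞)⁻¹ ^ n
      + (n : ℝ≥0∞) * (2^k * (2:ℝ≥0∞)⁻¹ ^ ek) := by
    refine le_trans (measure_mono (aux_subset n k hk)) ?_
    exact le_trans (measure_union_le _ _) (add_le_add hBad1 hBad2)
  -- finiteness
  have h2top : ((2:ℝ≥0∞)⁻¹) ≠ ∞ := by
    simp [ENNReal.inv_ne_top]
  have hBtop : ((n : ℝ≥0∞) * (2:ℝ≥0∞)⁻¹ ^ n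
      + (n : ℝ≥0∞) * (2^k * (2:ℝ≥0∞)⁻¹ ^ ek)) ≠ ∞ := by
    refine ENNReal.add_ne_top.mpr ⟨?_, ?_⟩
    · exact ENNReal.mul_ne_top (ENNReal.natCast_ne_top n) (ENNReal.pow_ne_top h2top)
    · exact ENNReal.mul_ne_top (ENNReal.natCast_ne_top n)
        (ENNReal.mul_ne_top (ENNReal.pow_ne_top (by simp)) (ENNReal.pow_ne_top h2top))
  have hbound : (μ Sᶜ).toReal ≤ ε := by
    refine le_trans (ENNReal.toReal_mono hBtop htotal) ?_
    have hconv : ((n : ℝ≥0∞) * (2:ℝ≥0∞)⁻¹ ^ n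
        + (n : ℝ≥0∞) * (2^k * (2:ℝ≥0∞)⁻¹ ^ ek)).toReal
        = (n:ℝ) * (2⁻¹:ℝ)^n + (n:ℝ) * ((2:ℝ)^k * (2⁻¹:ℝ)^ek) := by
      rw [ENNReal.toReal_add (ENNReal.mul_ne_top (ENNReal.natCast_ne_top n)
            (ENNReal.pow_ne_top h2top))
          (ENNReal.mul_ne_top (ENNReal.natCast_ne_top n)
            (ENNReal.mul_ne_top (ENNReal.pow_ne_top (by simp)) (ENNReal.pow_ne_top h2top)))]
      simp [ENNReal.toReal_mul, ENNReal.toReal_pow, ENNReal.toReal_inv]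
    rw [hconv]
    exact aux_real ε hε n hn4 hnε k hk
  have hmeasS : MeasurableSet S := (Set.to_countable S).measurableSet
  have hPC : μ S + μ Sᶜ = 1 := prob_add_prob_compl hmeasS
  have hsumReal : (μ S).toReal + (μ Sᶜ).toReal = 1 := by
    rw [← ENNReal.toReal_add (measure_ne_top μ S) (measure_ne_top μ Sᶜ), hPC]
    simp
  linarith
end
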